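/- arXiv:1805.05761 — 6 statements merged into one kernel-verified Lean document; each statement's English description precedes it below -/
import Mathlib

section
/- For every 1 ≤ m ≤ n, the function λ ↦ log S_m(λ) is concave on Γ_m: for all λ, μ ∈ Γ_m and t ∈ [0,1], log S_m(tλ + (1−t)μ) ≥ t·log S_m(λ) + (1−t)·log S_m(μ). -/
open Finset

/-- The `m`-th elementary symmetric polynomial of `lam : Fin n → ℝ`. -/
noncomputable def esymmS (n m : ℕ) (lam : Fin n → ℝ) : ℝ :=
  ∑ s ∈ Finset.univ.powersetCard m, ∏ i ∈ s, lam i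

/-- The Gårding cone `Γ_m ⊆ ℝ^n`. -/
def GammaCone (n m : ℕ) (lam : Fin n → ℝ) : Prop :=
  ∀ j : ℕ, 1 ≤ j → j ≤ m → 0 < esymmS n j lam

/-- `σ_m(λ|i)`: the `m`-th elementary symmetric polynomial of `λ` with the `i`-th entry deleted. -/
noncomputable def esymmDel (n m : ℕ) (lam : Fin n → ℝ) (i : Fin n) : ℝ :=
  ∑ s ∈ (Finset.univ.erase i).powersetCard m, ∏ l ∈ s, lam l

/-- `σ_m(λ|ij)`: the `m`-th elementary symmetric polynomial of `λ` with the `i`-th and `j`-th entries deleted. -/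
noncomputable def esymmDel2 (n m : ℕ) (lam : Fin n → ℝ) (i j : Fin n) : ℝ :=
  ∑ s ∈ ((Finset.univ.erase i).erase j).powersetCard m, ∏ l ∈ s, lam l

namespace GardingAux

variable {ι : Type*} [DecidableEq ι]
set_option linter.unusedSectionVars false
set_option maxHeartbeats 1000000




noncomputable def E (k : ℕ) (A : Finset ι) (x : ι → ℝ) : ℝ :=
  ∑ s ∈ A.powersetCard k, ∏ i ∈ s, x i

lemma E_zero (A : Finset ι) (x : ι → ℝ) : E 0 A x = 1 := by
  simp [E]

lemma E_eq_esymm (k : ℕ) (A : Finset ι) (x : ι → ℝ) :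
    E k A x = (A.val.map x).esymm k := (Finset.esymm_map_val x A k).symm

lemma E_eq_zero (k : ℕ) (A : Finset ι) (x : ι → ℝ) (h : A.card < k) : E k A x = 0 := by
  simp [E, Finset.powersetCard_eq_empty.2 h]

lemma E_one (A : Finset ι) (x : ι → ℝ) : E 1 A x = ∑ i ∈ A, x i := by
  rw [E, Finset.powersetCard_one, Finset.sum_map]
  simp

lemma E_self (A : Finset ι) (x : ι → ℝ) : E A.card A x = ∏ i ∈ A, x i := by
  rw [E, Finset.powersetCard_self]
  simp

lemma esymm_cons (a : ℝ) (s : Multiset ℝ) (k : ℕ) :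
    (a ::ₘ s).esymm (k+1) = s.esymm (k+1) + a * s.esymm k := by
  rw [Multiset.esymm, Multiset.powersetCard_cons, Multiset.map_add, Multiset.sum_add,
    Multiset.map_map]
  rw [Multiset.esymm, Multiset.esymm]
  congr 1
  have : ((Multiset.powersetCard k s).map (Multiset.prod ∘ Multiset.cons a)).sum
      = ((Multiset.powersetCard k s).map (fun t => a * t.prod)).sum := by
    congr 1
    apply Multiset.map_congr rfl
    intro t _
    simp [Multiset.prod_cons]
  rw [this, Multiset.sum_map_mul_left]

lemma E_erase (k : ℕ) (A : Finset ι) (x : ι → ℝ) {i : ι} (hi : i ∈ A) :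
    E (k+1) A x = E (k+1) (A.erase i) x + x i * E k (A.erase i) x := by
  have hv : A.val = i ::ₘ (A.erase i).val := by
    rw [Finset.erase_val, Multiset.cons_erase (by exact_mod_cast hi)]
  rw [E_eq_esymm, E_eq_esymm, E_eq_esymm, hv, Multiset.map_cons, esymm_cons]

/-- swap the sums over `i ∈ A` and `s ⊆ A \ {i}`. -/
lemma sum_erase_powersetCard (A : Finset ι) (k : ℕ) (g : ι → Finset ι → ℝ) :
    ∑ i ∈ A, ∑ s ∈ (A.erase i).powersetCard k, g i s
      = ∑ s ∈ A.powersetCard k, ∑ i ∈ A \ s, g i s := by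
  apply Finset.sum_comm'
  intro i s
  simp only [Finset.mem_powersetCard, Finset.subset_erase, Finset.mem_sdiff]
  tauto

lemma Id3 (A : Finset ι) (x : ι → ℝ) (k : ℕ) :
    ∑ i ∈ A, E k (A.erase i) x = ((A.card : ℝ) - k) * E k A x := by
  simp only [E]
  rw [sum_erase_powersetCard A k (fun _ s => ∏ j ∈ s, x j)]
  rw [Finset.mul_sum]
  apply Finset.sum_congr rfl
  intro s hs
  rw [Finset.mem_powersetCard] at hs
  rw [Finset.sum_const, Finset.card_sdiff_of_subset hs.1, hs.2, nsmul_eq_mul]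
  have hk : k ≤ A.card := hs.2 ▸ Finset.card_le_card hs.1
  push_cast [Nat.cast_sub hk]
  ring

lemma Id2 (A : Finset ι) (x : ι → ℝ) (k : ℕ) :
    ∑ i ∈ A, x i * E k (A.erase i) x = ((k : ℝ)+1) * E (k+1) A x := by
  have key : ∑ p ∈ A.sigma (fun i => (A.erase i).powersetCard k), (x p.1 * ∏ j ∈ p.2, x j)
      = ∑ q ∈ (A.powersetCard (k+1)).sigma (fun u => u), ∏ j ∈ q.1, x j := by
    apply Finset.sum_nbij' (i := fun p : (_ : ι) × Finset ι => (⟨insert p.1 p.2, p.1⟩ : (_ : Finset ι) × ι))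
      (j := fun q : (_ : Finset ι) × ι => (⟨q.2, q.1.erase q.2⟩ : (_ : ι) × Finset ι))
    · rintro ⟨i, s⟩ hp
      simp only [Finset.mem_sigma, Finset.mem_powersetCard, Finset.subset_erase] at hp ⊢
      obtain ⟨hiA, ⟨hsA, his⟩, hcard⟩ := hp
      refine ⟨⟨Finset.insert_subset hiA hsA, ?_⟩, Finset.mem_insert_self _ _⟩
      rw [Finset.card_insert_of_notMem his, hcard]
    · rintro ⟨u, i⟩ hq
      simp only [Finset.mem_sigma, Finset.mem_powersetCard] at hq ⊢
      obtain ⟨⟨huA, hcard⟩, hiu⟩ := hq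
      refine ⟨huA hiu, ?_, ?_⟩
      · rw [Finset.subset_erase]
        exact ⟨(Finset.erase_subset _ _).trans huA, Finset.notMem_erase _ _⟩
      · rw [Finset.card_erase_of_mem hiu, hcard]
        rfl
    · rintro ⟨i, s⟩ hp
      simp only [Finset.mem_sigma, Finset.mem_powersetCard, Finset.subset_erase] at hp
      obtain ⟨hiA, ⟨hsA, his⟩, hcard⟩ := hp
      simp [Finset.erase_insert his]
    · rintro ⟨u, i⟩ hq
      simp only [Finset.mem_sigma, Finset.mem_powersetCard] at hq
      obtain ⟨⟨huA, hcard⟩, hiu⟩ := hq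
      simp [Finset.insert_erase hiu]
    · rintro ⟨i, s⟩ hp
      simp only [Finset.mem_sigma, Finset.mem_powersetCard, Finset.subset_erase] at hp
      obtain ⟨hiA, ⟨hsA, his⟩, hcard⟩ := hp
      exact (Finset.prod_insert his).symm
  simp only [E, Finset.mul_sum]
  rw [Finset.sum_sigma' A (fun i => (A.erase i).powersetCard k) (fun i s => x i * ∏ j ∈ s, x j),
    key, Finset.sum_sigma]
  apply Finset.sum_congr rfl
  intro u hu
  rw [Finset.mem_powersetCard] at hu
  have hrfl : ∑ s ∈ u, ∏ j ∈ (⟨u, s⟩ : (_ : Finset ι) × ι).fst, x j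
      = ∑ _s ∈ u, ∏ j ∈ u, x j := rfl
  rw [hrfl, Finset.sum_const, hu.2, nsmul_eq_mul]
  push_cast
  ring




lemma Esub1 (B : Finset ι) (x : ι → ℝ) (hB : 1 ≤ B.card) :
    E (B.card - 1) B x = ∑ i ∈ B, ∏ j ∈ B.erase i, x j := by
  have h3 := Id3 B x (B.card - 1)
  have hco : ((B.card : ℝ) - ((B.card - 1 : ℕ) : ℝ)) = 1 := by
    rw [Nat.cast_sub hB]; push_cast; ring
  rw [hco, one_mul] at h3
  rw [← h3]
  apply Finset.sum_congr rfl
  intro i hi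
  rw [← Finset.card_erase_of_mem hi, E_self]

lemma FBase (A : Finset ι) (x : ι → ℝ) (h2 : 2 ≤ A.card) :
    (A.card : ℝ)^2 * (E A.card A x * E (A.card - 2) A x)
      ≤ (A.card.choose 2 : ℝ) * E (A.card - 1) A x ^ 2 := by
  classical
  set S := ∑ i ∈ A, ∏ j ∈ A.erase i, x j with hS
  set Q := ∑ i ∈ A, (∏ j ∈ A.erase i, x j)^2 with hQ
  have hf2 : E (A.card - 1) A x = S := Esub1 A x (by omega)
  have h3 := Id3 A x (A.card - 2)
  have hco : ((A.card : ℝ) - ((A.card - 2 : ℕ) : ℝ)) = 2 := by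
    rw [Nat.cast_sub h2]; push_cast; ring
  rw [hco] at h3
  have hinner : ∀ i ∈ A, E (A.card - 2) (A.erase i) x
      = ∑ j ∈ A.erase i, ∏ l ∈ (A.erase i).erase j, x l := by
    intro i hi
    have hc : (A.erase i).card = A.card - 1 := Finset.card_erase_of_mem hi
    have h := Esub1 (A.erase i) x (by omega)
    rw [hc, show A.card - 1 - 1 = A.card - 2 by omega] at h
    exact h
  have hdouble : (2:ℝ) * E (A.card - 2) A x
      = ∑ i ∈ A, ∑ j ∈ A.erase i, ∏ l ∈ (A.erase i).erase j, x l := by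
    rw [← h3]
    exact Finset.sum_congr rfl hinner
  have hprod : ∀ i ∈ A, ∀ j ∈ A.erase i,
      (∏ l ∈ (A.erase i).erase j, x l) * ∏ l ∈ A, x l
        = (∏ l ∈ A.erase i, x l) * ∏ l ∈ A.erase j, x l := by
    intro i hi j hj
    have hji : j ≠ i := Finset.ne_of_mem_erase hj
    have hjA : j ∈ A := Finset.mem_of_mem_erase hj
    have hiej : i ∈ A.erase j := Finset.mem_erase.mpr ⟨fun h => hji h.symm, hi⟩
    have e1 : ∏ l ∈ A.erase i, x l = x j * ∏ l ∈ (A.erase i).erase j, x l :=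
      (Finset.mul_prod_erase _ _ hj).symm
    have e2 : ∏ l ∈ A.erase j, x l = x i * ∏ l ∈ (A.erase j).erase i, x l :=
      (Finset.mul_prod_erase _ _ hiej).symm
    have e3 : ∏ l ∈ A, x l = x i * ∏ l ∈ A.erase i, x l :=
      (Finset.mul_prod_erase _ _ hi).symm
    rw [e2, Finset.erase_right_comm, e3, e1]
    ring
  have hkey : 2 * E (A.card - 2) A x * (∏ l ∈ A, x l) = S^2 - Q := by
    calc 2 * E (A.card-2) A x * (∏ l ∈ A, x l)
        = ∑ i ∈ A, (∑ j ∈ A.erase i, ∏ l ∈ (A.erase i).erase j, x l) * ∏ l ∈ A, x l := by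
          rw [hdouble, Finset.sum_mul]
      _ = ∑ i ∈ A, ∑ j ∈ A.erase i, (∏ l ∈ A.erase i, x l) * ∏ l ∈ A.erase j, x l := by
          apply Finset.sum_congr rfl
          intro i hi
          rw [Finset.sum_mul]
          exact Finset.sum_congr rfl (fun j hj => hprod i hi j hj)
      _ = ∑ i ∈ A, (∏ l ∈ A.erase i, x l) * (S - ∏ l ∈ A.erase i, x l) := by
          apply Finset.sum_congr rfl
          intro i hi
          rw [← Finset.mul_sum, Finset.sum_erase_eq_sub hi]
      _ = S^2 - Q := by
          rw [hS, hQ]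
          rw [Finset.sum_congr rfl (fun i _ => mul_sub (∏ j ∈ A.erase i, x j) S (∏ j ∈ A.erase i, x j)),
            Finset.sum_sub_distrib, ← Finset.sum_mul]
          rw [sq]
          congr 1
          apply Finset.sum_congr rfl
          intro i _
          rw [sq]
  have hEn : E A.card A x = ∏ l ∈ A, x l := E_self A x
  have hCS : S^2 ≤ (A.card : ℝ) * Q := by
    have h := sq_sum_le_card_mul_sum_sq (s := A) (f := fun i => ∏ j ∈ A.erase i, x j)
    exact_mod_cast h
  have hchoose : (A.card.choose 2 : ℝ) = (A.card : ℝ) * ((A.card : ℝ) - 1) / 2 :=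
    Nat.cast_choose_two (K := ℝ) A.card
  rw [hEn, hf2, hchoose]
  nlinarith [hkey, hCS, mul_le_mul_of_nonneg_left hCS (show (0:ℝ) ≤ (A.card:ℝ) by positivity)]

open Polynomial in
lemma BML (m : Multiset ℝ) (h2 : 2 ≤ Multiset.card m) :
    ((Multiset.card m : ℝ))^2 * (m.esymm (Multiset.card m) * m.esymm (Multiset.card m - 2))
      ≤ (((Multiset.card m).choose 2 : ℕ) : ℝ) * m.esymm (Multiset.card m - 1) ^ 2 := by
  obtain ⟨l, rfl⟩ : ∃ l : List ℝ, (l : Multiset ℝ) = m := ⟨m.toList, Multiset.coe_toList m⟩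
  rw [Multiset.coe_card] at *
  have huv : (Finset.univ : Finset (Fin l.length)).val.map l.get = (l : Multiset ℝ) := by
    rw [Fin.univ_val_map, List.ofFn_get]
  have hesymm : ∀ k, Multiset.esymm (l : Multiset ℝ) k = E k Finset.univ l.get := by
    intro k
    rw [← huv, Finset.esymm_map_val]
    rfl
  have hcardu : (Finset.univ : Finset (Fin l.length)).card = l.length := by
    simp
  have h := FBase (Finset.univ : Finset (Fin l.length)) l.get (by rw [hcardu]; exact h2)
  rw [hcardu] at h
  rw [hesymm, hesymm, hesymm]
  exact h

open Polynomial in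
lemma splits_deriv {p : ℝ[X]} (hp : p.Splits) (hd : 1 ≤ p.natDegree) :
    (derivative p).Splits ∧ (derivative p).natDegree = p.natDegree - 1 := by
  have hcard : Multiset.card p.roots = p.natDegree := splits_iff_card_roots.mp hp
  have h1 : p.natDegree ≤ Multiset.card (derivative p).roots + 1 := by
    rw [← hcard]; exact p.card_roots_le_derivative
  have h2 : Multiset.card (derivative p).roots ≤ (derivative p).natDegree :=
    (derivative p).card_roots'
  have h3 : (derivative p).natDegree ≤ p.natDegree - 1 := natDegree_derivative_le p
  exact ⟨splits_iff_card_roots.mpr (by omega), by omega⟩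

open Polynomial in
lemma NIP : ∀ (j : ℕ), 1 ≤ j → ∀ (p : ℝ[X]), p.Splits → j + 1 ≤ p.natDegree →
    ((p.natDegree.choose j : ℕ) : ℝ)^2 * (p.coeff (j-1) * p.coeff (j+1))
      ≤ (((p.natDegree.choose (j-1) : ℕ) : ℝ) * ((p.natDegree.choose (j+1) : ℕ) : ℝ)) * p.coeff j ^ 2 := by
  intro j
  induction j with
  | zero => omega
  | succ i IH =>
    intro _ p hsp hdeg
    simp only [Nat.add_sub_cancel]
    rcases Nat.eq_zero_or_pos i with hi0 | hipos
    · -- base case j = 1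
      subst hi0
      simp only [Nat.zero_add] at *
      have hp0 : p ≠ 0 := by
        intro h; rw [h] at hdeg; simp at hdeg
      have hcard : Multiset.card p.roots = p.natDegree := splits_iff_card_roots.mp hsp
      have hfact := Polynomial.C_leadingCoeff_mul_prod_multiset_X_sub_C hcard
      set N := p.natDegree with hN
      set msk : Multiset ℝ := p.roots.map (fun r => -r) with hmsk
      have hmap : p.roots.map (fun a => X - C a) = msk.map (fun a => X + C a) := by
        rw [hmsk, Multiset.map_map]
        apply Multiset.map_congr rfl
        intro a _
        simp [sub_eq_add_neg]
      have hcardm : Multiset.card msk = N := by rw [hmsk, Multiset.card_map, hcard]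
      have hcoeff : ∀ k, k ≤ N → p.coeff k = p.leadingCoeff * msk.esymm (N - k) := by
        intro k hk
        conv_lhs => rw [← hfact]
        rw [hmap, Polynomial.coeff_C_mul, Multiset.prod_X_add_C_coeff msk (by omega), hcardm]
      have h0 := hcoeff 0 (by omega)
      have h1 := hcoeff 1 (by omega)
      have h22 := hcoeff 2 (by omega)
      have hbase := BML msk (by omega)
      rw [hcardm] at hbase
      rw [Nat.sub_zero] at h0
      rw [h0, h1, h22]
      simp only [Nat.choose_one_right, Nat.choose_zero_right, Nat.cast_one, one_mul]
      set L := p.leadingCoeff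
      calc ((N:ℝ))^2 * ((L * msk.esymm N) * (L * msk.esymm (N-2)))
          = L^2 * ((N:ℝ)^2 * (msk.esymm N * msk.esymm (N-2))) := by ring
        _ ≤ L^2 * (((N.choose 2 : ℕ):ℝ) * msk.esymm (N-1)^2) :=
            mul_le_mul_of_nonneg_left hbase (sq_nonneg L)
        _ = ((N.choose 2 : ℕ):ℝ) * (L * msk.esymm (N-1))^2 := by ring
    · -- step case j = i + 1, i ≥ 1
      have hd1 : 1 ≤ p.natDegree := by omega
      obtain ⟨hsp', hdeg'⟩ := splits_deriv hsp hd1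
      obtain ⟨M, hM⟩ : ∃ M, p.natDegree = M + 1 := ⟨p.natDegree - 1, by omega⟩
      have hdegM : (derivative p).natDegree = M := by omega
      obtain ⟨ii, rfl⟩ : ∃ ii, i = ii + 1 := ⟨i - 1, by omega⟩
      have hIH := IH (by omega) (derivative p) hsp' (by omega)
      rw [hdegM] at hIH
      simp only [Nat.add_sub_cancel] at hIH
      rw [coeff_derivative, coeff_derivative, coeff_derivative] at hIH
      push_cast at hIH
      rw [hM]
      push_cast
      set a := p.coeff (ii+1)
      set b := p.coeff (ii+1+1)
      set c := p.coeff (ii+1+1+1)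
      set A1 : ℝ := (((M+1).choose (ii+1) : ℕ) : ℝ) with hA1
      set A2 : ℝ := (((M+1).choose (ii+1+1) : ℕ) : ℝ) with hA2
      set A3 : ℝ := (((M+1).choose (ii+1+1+1) : ℕ) : ℝ) with hA3
      set B1 : ℝ := ((M.choose ii : ℕ) : ℝ) with hB1
      set B2 : ℝ := ((M.choose (ii+1) : ℕ) : ℝ) with hB2
      set B3 : ℝ := ((M.choose (ii+1+1) : ℕ) : ℝ) with hB3
      have e1 : ((M:ℝ)+1) * B1 = A1 * ((ii:ℝ)+1) := by
        rw [hB1, hA1]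
        exact_mod_cast congrArg (Nat.cast (R := ℝ)) (Nat.add_one_mul_choose_eq M ii)
      have e2 : ((M:ℝ)+1) * B2 = A2 * ((ii:ℝ)+2) := by
        rw [hB2, hA2]
        have := Nat.add_one_mul_choose_eq M (ii+1)
        exact_mod_cast congrArg (Nat.cast (R := ℝ)) this
      have e3 : ((M:ℝ)+1) * B3 = A3 * ((ii:ℝ)+3) := by
        rw [hB3, hA3]
        have := Nat.add_one_mul_choose_eq M (ii+1+1)
        exact_mod_cast congrArg (Nat.cast (R := ℝ)) this
      have E2 : ((M:ℝ)+1)^2 * B2^2 = A2^2 * ((ii:ℝ)+2)^2 := by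
        linear_combination (((M:ℝ)+1)*B2 + A2*((ii:ℝ)+2)) * e2
      have E13 : ((M:ℝ)+1)^2 * (B1*B3) = (A1*A3) * (((ii:ℝ)+1)*((ii:ℝ)+3)) := by
        linear_combination (((M:ℝ)+1)*B1) * e3 + (A3*((ii:ℝ)+3)) * e1
      have hK : (0:ℝ) < ((ii:ℝ)+1)*(((ii:ℝ)+3)*((ii:ℝ)+2)^2) := by positivity
      apply le_of_mul_le_mul_right _ hK
      calc (A2^2 * (a * c)) * (((ii:ℝ)+1)*(((ii:ℝ)+3)*((ii:ℝ)+2)^2))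
          = ((M:ℝ)+1)^2 * (B2^2 * ((a*((ii:ℝ)+1)) * (c*((ii:ℝ)+3)))) := by
            linear_combination (-(a*c*((ii:ℝ)+1)*((ii:ℝ)+3))) * E2
        _ ≤ ((M:ℝ)+1)^2 * ((B1*B3) * (b*((ii:ℝ)+2))^2) := by
            nlinarith [mul_le_mul_of_nonneg_left hIH (show (0:ℝ) ≤ ((M:ℝ)+1)^2 by positivity)]
        _ = ((A1*A3) * b^2) * (((ii:ℝ)+1)*(((ii:ℝ)+3)*((ii:ℝ)+2)^2)) := by
            linear_combination (b^2*((ii:ℝ)+2)^2) * E13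

open Polynomial in
lemma NI (s : Multiset ℝ) (k : ℕ) (hk : 1 ≤ k) (hks : k + 1 ≤ Multiset.card s) :
    (((Multiset.card s).choose k : ℕ) : ℝ)^2 * (s.esymm (k-1) * s.esymm (k+1))
      ≤ (((Multiset.card s).choose (k-1) : ℕ) : ℝ) * (((Multiset.card s).choose (k+1) : ℕ) : ℝ)
        * s.esymm k ^ 2 := by
  set N := Multiset.card s with hNdef
  set p : ℝ[X] := (s.map (fun a => X + C a)).prod with hp
  have hrw : s.map (fun a => X + C a) = (s.map (fun a => -a)).map (fun a => X - C a) := by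
    rw [Multiset.map_map]
    apply Multiset.map_congr rfl
    intro a _
    simp [sub_eq_add_neg]
  have hdeg : p.natDegree = N := by
    rw [hp, hrw, natDegree_multiset_prod_X_sub_C_eq_card, Multiset.card_map]
  have hroots : p.roots = s.map (fun a => -a) := by
    rw [hp, hrw, roots_multiset_prod_X_sub_C]
  have hsplits : p.Splits := by
    rw [splits_iff_card_roots, hroots, Multiset.card_map, hdeg]
  have hcoeff : ∀ j, j ≤ N → p.coeff j = s.esymm (N - j) := by
    intro j hj
    rw [hp, Multiset.prod_X_add_C_coeff s (by omega)]
  have hmain := NIP (N - k) (by omega) p hsplits (by omega)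
  rw [hdeg] at hmain
  rw [show N - k - 1 = N - (k+1) by omega, show N - k + 1 = N - (k-1) by omega] at hmain
  rw [hcoeff _ (by omega), hcoeff _ (by omega), hcoeff _ (by omega)] at hmain
  rw [show N - (N - (k+1)) = k + 1 by omega, show N - (N - (k-1)) = k - 1 by omega,
    show N - (N - k) = k by omega] at hmain
  rw [Nat.choose_symm (by omega), Nat.choose_symm (by omega), Nat.choose_symm (by omega)] at hmain
  linarith [hmain]

lemma NIfin (A : Finset ι) (x : ι → ℝ) (k : ℕ) (hk : 1 ≤ k) (hkA : k + 1 ≤ A.card) :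
    ((A.card.choose k : ℕ) : ℝ)^2 * (E (k-1) A x * E (k+1) A x)
      ≤ ((A.card.choose (k-1) : ℕ) : ℝ) * ((A.card.choose (k+1) : ℕ) : ℝ) * E k A x ^ 2 := by
  have hcard : Multiset.card (A.val.map x) = A.card := by
    rw [Multiset.card_map]; rfl
  have h := NI (A.val.map x) k hk (by rwa [hcard])
  rw [hcard] at h
  rw [E_eq_esymm, E_eq_esymm, E_eq_esymm]
  exact h

lemma choose_lc (N k : ℕ) (h : k + 2 ≤ N) :
    N.choose k * N.choose (k+2) ≤ N.choose (k+1) ^ 2 := by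
  have h1 : N.choose (k+1) * (k+1) = N.choose k * (N - k) := Nat.choose_succ_right_eq N k
  have h2 : N.choose (k+2) * (k+2) = N.choose (k+1) * (N - (k+1)) := Nat.choose_succ_right_eq N (k+1)
  have hpos : 0 < (N - k) * (k + 2) := Nat.mul_pos (by omega) (by omega)
  apply Nat.le_of_mul_le_mul_right _ hpos
  calc N.choose k * N.choose (k+2) * ((N-k)*(k+2))
      = (N.choose k * (N-k)) * (N.choose (k+2) * (k+2)) := by ring
    _ = (N.choose (k+1) * (k+1)) * (N.choose (k+1) * (N-(k+1))) := by rw [h1, h2]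
    _ = N.choose (k+1)^2 * ((k+1) * (N-(k+1))) := by ring
    _ ≤ N.choose (k+1)^2 * ((N-k)*(k+2)) := by
        apply Nat.mul_le_mul_left
        calc (k+1) * (N-(k+1)) ≤ (k+2) * (N-k) := Nat.mul_le_mul (by omega) (by omega)
          _ = (N-k)*(k+2) := Nat.mul_comm _ _


def Gam (m : ℕ) (A : Finset ι) (x : ι → ℝ) : Prop :=
  ∀ j : ℕ, 1 ≤ j → j ≤ m → 0 < E j A x

lemma Gam_mono {m m' : ℕ} (h : m' ≤ m) {A : Finset ι} {x : ι → ℝ} (hg : Gam m A x) :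
    Gam m' A x := fun j h1 h2 => hg j h1 (h2.trans h)

lemma Epos {m : ℕ} {A : Finset ι} {x : ι → ℝ} (hg : Gam m A x) {j : ℕ} (hj : j ≤ m) :
    0 < E j A x := by
  rcases Nat.eq_zero_or_pos j with rfl | hj1
  · rw [E_zero]; norm_num
  · exact hg j hj1 hj

lemma pc {a b t : ℝ} (ha : 0 < a) (hb : 0 < b) (ht0 : 0 ≤ t) (ht1 : t ≤ 1) :
    0 < t * a + (1 - t) * b := by
  rcases eq_or_lt_of_le ht0 with h | h
  · rw [← h]
    norm_num
    exact hb
  · have h1 : 0 ≤ (1-t)*b := mul_nonneg (by linarith) hb.le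
    nlinarith [mul_pos h ha]

lemma qol {ax ay bx byy bz t : ℝ} (ht0 : 0 ≤ t) (ht1 : t ≤ 1) (hbx : 0 < bx) (hby : 0 < byy)
    (hbz : t * bx + (1 - t) * byy ≤ bz) :
    (t * ax + (1 - t) * ay)^2 / bz ≤ t * (ax^2 / bx) + (1 - t) * (ay^2 / byy) := by
  have hc : 0 < t * bx + (1 - t) * byy := pc hbx hby ht0 ht1
  have hzpos : 0 < bz := lt_of_lt_of_le hc hbz
  have step1 : (t * ax + (1 - t) * ay)^2 / bz
      ≤ (t * ax + (1 - t) * ay)^2 / (t * bx + (1 - t) * byy) :=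
    div_le_div_of_nonneg_left (sq_nonneg _) hc hbz
  refine step1.trans ?_
  rw [div_le_iff₀ hc]
  have key : (t*(ax^2/bx) + (1-t)*(ay^2/byy)) * (t*bx + (1-t)*byy) - (t*ax+(1-t)*ay)^2
      = t*(1-t)*(ax*byy - ay*bx)^2 / (bx*byy) := by
    field_simp
    ring
  have hnn : 0 ≤ t*(1-t)*(ax*byy - ay*bx)^2 / (bx*byy) := by
    apply div_nonneg _ (le_of_lt (mul_pos hbx hby))
    have h1 : 0 ≤ t * (1-t) := mul_nonneg ht0 (by linarith)
    exact mul_nonneg h1 (sq_nonneg _)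
  linarith [key, hnn]

theorem Dthm : ∀ (m : ℕ) (A : Finset ι) (x : ι → ℝ) (i : ι), i ∈ A → Gam m A x →
    Gam (m-1) (A.erase i) x := by
  intro m
  induction m with
  | zero => intro A x i _ _ j h1 h2; omega
  | succ mm IH =>
    intro A x i hiA hG
    rcases Nat.eq_zero_or_pos mm with rfl | hmm
    · intro j h1 h2; omega
    · simp only [Nat.add_sub_cancel]
      have hGm : Gam mm A x := Gam_mono (by omega) hG
      have hprev : Gam (mm-1) (A.erase i) x := IH A x i hiA hGm
      intro j hj1 hjmm
      rcases lt_or_eq_of_le hjmm with hlt | rfl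
      · exact hprev j hj1 (by omega)
      · by_contra hq0
        push_neg at hq0
        set B := A.erase i with hB
        have hq : E j B x ≤ 0 := hq0
        have hEA : ∀ l, l ≤ j + 1 → 0 < E l A x := fun l hl => Epos hG hl
        have hid1 : E (j+1) A x = E (j+1) B x + x i * E j B x := E_erase j A x hiA
        have hid2 : E j A x = E j B x + x i * E (j-1) B x := by
          obtain ⟨q, rfl⟩ : ∃ q, j = q + 1 := ⟨j - 1, by omega⟩
          simpa using E_erase q A x hiA
        have hBm1 : 0 < E (j-1) B x := Epos hprev (by omega)
        have hP1 : 0 < E j B x + x i * E (j-1) B x := by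
          rw [← hid2]; exact hEA j (by omega)
        have hP2 : 0 < E (j+1) B x + x i * E j B x := by
          rw [← hid1]; exact hEA (j+1) (by omega)
        have hxi : 0 < x i := by nlinarith [hP1, hBm1, hq]
        have hEj1B : 0 < E (j+1) B x := by nlinarith [hP2, hxi, hq]
        have hcardB : j + 1 ≤ B.card := by
          by_contra hcb
          push_neg at hcb
          rw [E_eq_zero _ _ _ (by omega)] at hEj1B
          exact lt_irrefl _ hEj1B
        have hprodgt : E j B x ^ 2 < E (j-1) B x * E (j+1) B x := by
          nlinarith [mul_nonneg (neg_nonneg.2 hq) hP1.le, mul_pos hBm1 hP2]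
        have hNewton := NIfin B x j (by omega) hcardB
        have hbin : (B.card.choose (j-1)) * (B.card.choose (j+1)) ≤ (B.card.choose j)^2 := by
          obtain ⟨q, rfl⟩ : ∃ q, j = q + 1 := ⟨j - 1, by omega⟩
          simpa using choose_lc B.card q (by omega)
        have hcast : ((B.card.choose (j-1) : ℕ):ℝ) * ((B.card.choose (j+1) : ℕ):ℝ)
            ≤ ((B.card.choose j : ℕ):ℝ)^2 := by exact_mod_cast hbin
        have hcpos : 0 < ((B.card.choose j : ℕ) : ℝ) := by
          exact_mod_cast Nat.choose_pos (by omega : j ≤ B.card)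
        have hc13nn : 0 ≤ ((B.card.choose (j-1) : ℕ):ℝ) * ((B.card.choose (j+1) : ℕ):ℝ) := by
          positivity
        nlinarith [hNewton, hcast, mul_pos hBm1 hEj1B, sq_nonneg (E j B x), hcpos, hprodgt,
          mul_lt_mul_of_pos_left hprodgt (mul_pos hcpos hcpos)]

theorem Cthm : ∀ (m : ℕ) (A : Finset ι) (x y : ι → ℝ) (t : ℝ), 0 ≤ t → t ≤ 1 →
    Gam m A x → Gam m A y →
    Gam m A (fun i => t * x i + (1 - t) * y i) ∧
      t * (E m A x / E (m-1) A x) + (1 - t) * (E m A y / E (m-1) A y)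
        ≤ E m A (fun i => t * x i + (1 - t) * y i)
            / E (m-1) A (fun i => t * x i + (1 - t) * y i) := by
  intro m
  induction m with
  | zero =>
    intro A x y t ht0 ht1 hx hy
    refine ⟨fun j h1 h2 => by omega, ?_⟩
    simp only [Nat.zero_sub, E_zero]
    norm_num
  | succ mm IH =>
    intro A x y t ht0 ht1 hx hy
    have hlin : E 1 A (fun i => t * x i + (1 - t) * y i)
        = t * E 1 A x + (1-t) * E 1 A y := by
      simp only [E_one, Finset.sum_add_distrib, Finset.mul_sum]
    rcases Nat.eq_zero_or_pos mm with rfl | hmmpos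
    · -- m = 1
      have hE1z : 0 < E 1 A (fun i => t * x i + (1 - t) * y i) := by
        rw [hlin]
        exact pc (hx 1 le_rfl le_rfl) (hy 1 le_rfl le_rfl) ht0 ht1
      constructor
      · intro j h1 h2
        have : j = 1 := by omega
        subst this
        exact hE1z
      · simp only [Nat.add_sub_cancel, E_zero, div_one]
        rw [hlin]
    · obtain ⟨k, rfl⟩ : ∃ k, mm = k + 1 := ⟨mm - 1, by omega⟩
      set z := fun i => t * x i + (1 - t) * y i with hzdef
      -- m = k+2
      have hxk : Gam (k+1) A x := Gam_mono (by omega) hx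
      have hyk : Gam (k+1) A y := Gam_mono (by omega) hy
      have hIHA := IH A x y t ht0 ht1 hxk hyk
      have hzG : Gam (k+1) A z := hIHA.1
      have pEx1 : 0 < E (k+1) A x := Epos hx (by omega)
      have pEx2 : 0 < E (k+2) A x := Epos hx (by omega)
      have pEy1 : 0 < E (k+1) A y := Epos hy (by omega)
      have pEy2 : 0 < E (k+2) A y := Epos hy (by omega)
      have pEz1 : 0 < E (k+1) A z := Epos hzG le_rfl
      have hDix : ∀ i ∈ A, Gam (k+1) (A.erase i) x := by
        intro i hi
        have := Dthm (k+2) A x i hi hx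
        simpa using this
      have hDiy : ∀ i ∈ A, Gam (k+1) (A.erase i) y := by
        intro i hi
        have := Dthm (k+2) A y i hi hy
        simpa using this
      have hIHi : ∀ i ∈ A, Gam (k+1) (A.erase i) z ∧
          t * (E (k+1) (A.erase i) x / E k (A.erase i) x)
            + (1-t) * (E (k+1) (A.erase i) y / E k (A.erase i) y)
          ≤ E (k+1) (A.erase i) z / E k (A.erase i) z := by
        intro i hi
        have := IH (A.erase i) x y t ht0 ht1 (hDix i hi) (hDiy i hi)
        simpa using this
      -- per-i term inequality
      have hterm : ∀ i ∈ A,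
          (z i)^2 * E k (A.erase i) z / E (k+1) A z
            ≤ t * ((x i)^2 * E k (A.erase i) x / E (k+1) A x)
              + (1-t) * ((y i)^2 * E k (A.erase i) y / E (k+1) A y) := by
        intro i hi
        have pkx : 0 < E k (A.erase i) x := Epos (hDix i hi) (by omega)
        have pky : 0 < E k (A.erase i) y := Epos (hDiy i hi) (by omega)
        have pkz : 0 < E k (A.erase i) z := Epos (hIHi i hi).1 (by omega)
        have hdx : E (k+1) A x / E k (A.erase i) x
            = x i + E (k+1) (A.erase i) x / E k (A.erase i) x := by
          rw [E_erase k A x hi]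
          field_simp
          ring
        have hdy : E (k+1) A y / E k (A.erase i) y
            = y i + E (k+1) (A.erase i) y / E k (A.erase i) y := by
          rw [E_erase k A y hi]
          field_simp
          ring
        have hdz : E (k+1) A z / E k (A.erase i) z
            = z i + E (k+1) (A.erase i) z / E k (A.erase i) z := by
          rw [E_erase k A z hi]
          field_simp
          ring
        have hdcomb : t * (E (k+1) A x / E k (A.erase i) x)
            + (1-t) * (E (k+1) A y / E k (A.erase i) y)
            ≤ E (k+1) A z / E k (A.erase i) z := by
          rw [hdx, hdy, hdz]
          have hq := (hIHi i hi).2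
          have hzi : z i = t * x i + (1-t) * y i := rfl
          rw [hzi]
          linarith [hq]
        have dxpos : 0 < E (k+1) A x / E k (A.erase i) x := div_pos pEx1 pkx
        have dypos : 0 < E (k+1) A y / E k (A.erase i) y := div_pos pEy1 pky
        have hqol := qol (ax := x i) (ay := y i) ht0 ht1 dxpos dypos hdcomb
        have hzi : z i = t * x i + (1-t) * y i := rfl
        rw [← hzi] at hqol
        rw [div_div_eq_mul_div, div_div_eq_mul_div, div_div_eq_mul_div] at hqol
        exact hqol
      have hsum : ∑ i ∈ A, (z i)^2 * E k (A.erase i) z / E (k+1) A z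
          ≤ t * ∑ i ∈ A, (x i)^2 * E k (A.erase i) x / E (k+1) A x
            + (1-t) * ∑ i ∈ A, (y i)^2 * E k (A.erase i) y / E (k+1) A y := by
        rw [Finset.mul_sum, Finset.mul_sum, ← Finset.sum_add_distrib]
        exact Finset.sum_le_sum hterm
      have hQid : ∀ w : ι → ℝ, E (k+1) A w ≠ 0 →
          ((k:ℝ)+2) * (E (k+2) A w / E (k+1) A w)
            = E 1 A w - ∑ i ∈ A, (w i)^2 * E k (A.erase i) w / E (k+1) A w := by
        intro w hw
        have hId2 := Id2 A w (k+1)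
        have hsplit : ∀ i ∈ A, w i * E (k+1) (A.erase i) w
            = w i * E (k+1) A w - (w i)^2 * E k (A.erase i) w := by
          intro i hi
          rw [E_erase k A w hi]
          ring
        rw [Finset.sum_congr rfl hsplit, Finset.sum_sub_distrib, ← Finset.sum_mul] at hId2
        have hcast : (((k+1 : ℕ)):ℝ) + 1 = (k:ℝ) + 2 := by push_cast; ring
        rw [hcast] at hId2
        calc ((k:ℝ)+2) * (E (k+2) A w / E (k+1) A w)
            = (((k:ℝ)+2) * E (k+2) A w) / E (k+1) A w := by rw [mul_div_assoc]
          _ = ((∑ i ∈ A, w i) * E (k+1) A w - ∑ i ∈ A, (w i)^2 * E k (A.erase i) w)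
                / E (k+1) A w := by rw [← hId2]
          _ = E 1 A w - ∑ i ∈ A, (w i)^2 * E k (A.erase i) w / E (k+1) A w := by
              rw [sub_div, mul_div_cancel_right₀ _ hw, ← Finset.sum_div, E_one]
      have hQx := hQid x pEx1.ne'
      have hQy := hQid y pEy1.ne'
      have hQz := hQid z pEz1.ne'
      have hquot : t * (E (k+2) A x / E (k+1) A x) + (1-t) * (E (k+2) A y / E (k+1) A y)
          ≤ E (k+2) A z / E (k+1) A z := by
        have hk2 : (0:ℝ) < (k:ℝ) + 2 := by positivity
        rw [← mul_le_mul_iff_right₀ hk2]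
        have expand : ((k:ℝ)+2) * (t * (E (k+2) A x / E (k+1) A x)
              + (1-t) * (E (k+2) A y / E (k+1) A y))
            = t * (((k:ℝ)+2) * (E (k+2) A x / E (k+1) A x))
              + (1-t) * (((k:ℝ)+2) * (E (k+2) A y / E (k+1) A y)) := by ring
        rw [expand, hQx, hQy, hQz]
        linarith [hsum, hlin]
      have hQxpos : 0 < E (k+2) A x / E (k+1) A x := div_pos pEx2 pEx1
      have hQypos : 0 < E (k+2) A y / E (k+1) A y := div_pos pEy2 pEy1
      have hQzpos : 0 < E (k+2) A z / E (k+1) A z :=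
        lt_of_lt_of_le (pc hQxpos hQypos ht0 ht1) hquot
      have pEz2 : 0 < E (k+2) A z := by
        have h := mul_pos hQzpos pEz1
        rwa [div_mul_cancel₀ _ pEz1.ne'] at h
      constructor
      · intro j h1 h2
        rcases lt_or_eq_of_le h2 with hlt | rfl
        · exact hzG j h1 (by omega)
        · exact pEz2
      · simpa using hquot

theorem Lthm : ∀ (m : ℕ) (A : Finset ι) (x y : ι → ℝ) (t : ℝ), 0 ≤ t → t ≤ 1 →
    Gam m A x → Gam m A y →
    t * Real.log (E m A x) + (1 - t) * Real.log (E m A y)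
      ≤ Real.log (E m A (fun i => t * x i + (1 - t) * y i)) := by
  intro m
  induction m with
  | zero => intro A x y t ht0 ht1 _ _; simp [E_zero]
  | succ k IH =>
    intro A x y t ht0 ht1 hx hy
    set z := fun i => t * x i + (1 - t) * y i with hzdef
    have hxk : Gam k A x := Gam_mono (by omega) hx
    have hyk : Gam k A y := Gam_mono (by omega) hy
    have hIHlog := IH A x y t ht0 ht1 hxk hyk
    obtain ⟨hzG, hquot⟩ := Cthm (k+1) A x y t ht0 ht1 hx hy
    simp only [Nat.add_sub_cancel] at hquot
    have px1 : 0 < E (k+1) A x := Epos hx le_rfl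
    have px0 : 0 < E k A x := Epos hx (by omega)
    have py1 : 0 < E (k+1) A y := Epos hy le_rfl
    have py0 : 0 < E k A y := Epos hy (by omega)
    have pz1 : 0 < E (k+1) A z := Epos hzG le_rfl
    have pz0 : 0 < E k A z := Epos hzG (by omega)
    have hQxpos : 0 < E (k+1) A x / E k A x := div_pos px1 px0
    have hQypos : 0 < E (k+1) A y / E k A y := div_pos py1 py0
    have hcomb : 0 < t * (E (k+1) A x / E k A x) + (1-t) * (E (k+1) A y / E k A y) :=
      pc hQxpos hQypos ht0 ht1
    have hlog1 : t * Real.log (E (k+1) A x / E k A x)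
        + (1-t) * Real.log (E (k+1) A y / E k A y)
        ≤ Real.log (t * (E (k+1) A x / E k A x) + (1-t) * (E (k+1) A y / E k A y)) := by
      have hcc := strictConcaveOn_log_Ioi.concaveOn
      have h := hcc.2 (Set.mem_Ioi.mpr hQxpos) (Set.mem_Ioi.mpr hQypos) ht0
        (by linarith : (0:ℝ) ≤ 1 - t) (by ring)
      simpa using h
    have hlog2 : Real.log (t * (E (k+1) A x / E k A x) + (1-t) * (E (k+1) A y / E k A y))
        ≤ Real.log (E (k+1) A z / E k A z) :=
      (Real.log_le_log_iff hcomb (lt_of_lt_of_le hcomb hquot)).mpr hquot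
    have hdx : Real.log (E (k+1) A x / E k A x)
        = Real.log (E (k+1) A x) - Real.log (E k A x) := Real.log_div px1.ne' px0.ne'
    have hdy : Real.log (E (k+1) A y / E k A y)
        = Real.log (E (k+1) A y) - Real.log (E k A y) := Real.log_div py1.ne' py0.ne'
    have hdz : Real.log (E (k+1) A z / E k A z)
        = Real.log (E (k+1) A z) - Real.log (E k A z) := Real.log_div pz1.ne' pz0.ne'
    have m1 : t * Real.log (E (k+1) A x / E k A x)
        = t * Real.log (E (k+1) A x) - t * Real.log (E k A x) := by rw [hdx]; ring
    have m2 : (1-t) * Real.log (E (k+1) A y / E k A y)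
        = (1-t) * Real.log (E (k+1) A y) - (1-t) * Real.log (E k A y) := by rw [hdy]; ring
    linarith [hIHlog, hlog1, hlog2, m1, m2, hdz]

end GardingAux

/-- Concavity of log S_m on the Gårding cone. -/
theorem esymm_log_concave (n m : ℕ) (hm : 1 ≤ m) (hmn : m ≤ n)
    (lam mu : Fin n → ℝ) (hlam : GammaCone n m lam) (hmu : GammaCone n m mu)
    (t : ℝ) (ht0 : 0 ≤ t) (ht1 : t ≤ 1) :
    t * Real.log (esymmS n m lam) + (1 - t) * Real.log (esymmS n m mu) ≤
      Real.log (esymmS n m (fun i => t * lam i + (1 - t) * mu i)) := by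
  have hx : GardingAux.Gam m Finset.univ lam := fun j h1 h2 => hlam j h1 h2
  have hy : GardingAux.Gam m Finset.univ mu := fun j h1 h2 => hmu j h1 h2
  exact GardingAux.Lthm m Finset.univ lam mu t ht0 ht1 hx hy
end

section
/- Let Ω ⊂ ℝ^n be a nonempty open set and let ψ : Ω → ℝ be a nonnegative differentiable function whose gradient ∇ψ is Lipschitz on Ω with constant M ≥ 0 (the C^{1,1} hypothesis). Then √ψ is locally Lipschitz in Ω, and for every x ∈ Ω with ψ(x) > 0 one has |∇ψ(x)|/(2√(ψ(x))) ≤ max( |∇ψ(x)|/(2·dist(x, ∂Ω)), (1 + M)/2 ); here |∇√ψ(x)| = |∇ψ(x)|/(2√(ψ(x))) at such points. -/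
open Metric Set Filter

lemma blocki_keyA {n : ℕ} {Ω : Set (EuclideanSpace ℝ (Fin n))}
    {ψ : EuclideanSpace ℝ (Fin n) → ℝ}
    (hnonneg : ∀ x ∈ Ω, 0 ≤ ψ x)
    (hdiff : ∀ x ∈ Ω, DifferentiableAt ℝ ψ x)
    {M : ℝ} (hM : 0 ≤ M)
    (hLip : LipschitzOnWith (Real.toNNReal M) (gradient ψ) Ω)
    {y : EuclideanSpace ℝ (Fin n)} (hy : y ∈ Ω) {t : ℝ} (ht : 0 < t)
    (hball : closedBall y t ⊆ Ω) :
    ‖gradient ψ y‖ * t ≤ ψ y + M * t ^ 2 / 2 := by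
  set g := gradient ψ y with hg
  rcases eq_or_ne g 0 with h0 | h0
  · rw [h0]
    simp only [norm_zero, zero_mul]
    have := hnonneg y hy
    nlinarith [sq_nonneg t]
  have hgpos : 0 < ‖g‖ := norm_pos_iff.2 h0
  set v : EuclideanSpace ℝ (Fin n) := -(‖g‖⁻¹ • g) with hv
  have hvnorm : ‖v‖ = 1 := by
    rw [hv, norm_neg, norm_smul, norm_inv, norm_norm]
    field_simp
  have hmem : ∀ s ∈ Icc (0:ℝ) t, y + s • v ∈ Ω := by
    intro s hs
    apply hball
    rw [mem_closedBall, dist_eq_norm, add_sub_cancel_left, norm_smul, hvnorm, mul_one,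
      Real.norm_eq_abs, abs_of_nonneg hs.1]
    exact hs.2
  have hφd : ∀ s ∈ Icc (0:ℝ) t, HasDerivAt (fun s : ℝ => ψ (y + s • v))
      (inner ℝ (gradient ψ (y + s • v)) v : ℝ) s := by
    intro s hs
    have hc : HasDerivAt (fun s : ℝ => y + s • v) v s := by
      simpa using ((hasDerivAt_id s).smul_const v).const_add y
    have hψ : HasFDerivAt ψ (fderiv ℝ ψ (y + s • v)) (y + s • v) :=
      (hdiff _ (hmem s hs)).hasFDerivAt
    have := hψ.comp_hasDerivAt s hc
    have hgrad : (fderiv ℝ ψ (y + s • v)) v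
        = (inner ℝ (gradient ψ (y + s • v)) v : ℝ) := by
      rw [gradient, InnerProductSpace.toDual_symm_apply]
    rwa [hgrad] at this
  -- upper bound function
  set H : ℝ → ℝ := fun s => ψ y + (inner ℝ g v : ℝ) * s + M * s ^ 2 / 2 - ψ (y + s • v) with hH
  have hHd : ∀ s ∈ Icc (0:ℝ) t, HasDerivAt H
      ((inner ℝ g v : ℝ) + M * s - (inner ℝ (gradient ψ (y + s • v)) v : ℝ)) s := by
    intro s hs
    have h1 : HasDerivAt (fun s : ℝ => ψ y + (inner ℝ g v : ℝ) * s + M * s ^ 2 / 2)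
        ((inner ℝ g v : ℝ) + M * s) s := by
      have : HasDerivAt (fun s : ℝ => ψ y + (inner ℝ g v : ℝ) * s + M * s ^ 2 / 2)
          (0 + (inner ℝ g v : ℝ) * 1 + M * (2 * s ^ 1) / 2) s := by
        exact ((hasDerivAt_const s (ψ y)).add
          ((hasDerivAt_id s).const_mul (inner ℝ g v : ℝ))).add
          (((hasDerivAt_pow 2 s).const_mul M).div_const 2)
      convert this using 1
      ring
    exact h1.sub (hφd s hs)
  have hderiv_nonneg : ∀ s ∈ Ioo (0:ℝ) t,
      0 ≤ (inner ℝ g v : ℝ) + M * s - (inner ℝ (gradient ψ (y + s • v)) v : ℝ) := by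
    intro s hs
    have hsI : s ∈ Icc (0:ℝ) t := ⟨hs.1.le, hs.2.le⟩
    have hdist : dist (gradient ψ (y + s • v)) g ≤ M * s := by
      have := (lipschitzOnWith_iff_dist_le_mul.1 hLip) _ (hmem s hsI) _ hy
      rw [Real.coe_toNNReal _ hM] at this
      refine this.trans ?_
      have : dist (y + s • v) y = s := by
        rw [dist_eq_norm, add_sub_cancel_left, norm_smul, hvnorm, mul_one, Real.norm_eq_abs,
          abs_of_nonneg hsI.1]
      rw [this]
    have hinner : (inner ℝ (gradient ψ (y + s • v)) v : ℝ) - (inner ℝ g v : ℝ) ≤ M * s := by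
      have h1 : (inner ℝ (gradient ψ (y + s • v) - g) v : ℝ) ≤ ‖gradient ψ (y + s • v) - g‖ := by
        calc (inner ℝ (gradient ψ (y + s • v) - g) v : ℝ)
            ≤ ‖gradient ψ (y + s • v) - g‖ * ‖v‖ := real_inner_le_norm _ _
          _ = ‖gradient ψ (y + s • v) - g‖ := by rw [hvnorm, mul_one]
      rw [inner_sub_left] at h1
      rw [show dist (gradient ψ (y + s • v)) g = ‖gradient ψ (y + s • v) - g‖ from dist_eq_norm _ _] at hdist
      linarith
    linarith
  have hmono : MonotoneOn H (Icc 0 t) := by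
    apply monotoneOn_of_deriv_nonneg (convex_Icc 0 t)
    · exact fun s hs => ((hHd s hs).continuousAt).continuousWithinAt
    · intro s hs
      rw [interior_Icc] at hs
      exact ((hHd s ⟨hs.1.le, hs.2.le⟩).differentiableAt).differentiableWithinAt
    · intro s hs
      rw [interior_Icc] at hs
      rw [(hHd s ⟨hs.1.le, hs.2.le⟩).deriv]
      exact hderiv_nonneg s hs
  have hH0 : H 0 = 0 := by simp [hH]
  have hHt : 0 ≤ H t := by
    rw [← hH0]
    exact hmono (left_mem_Icc.2 ht.le) (right_mem_Icc.2 ht.le) ht.le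
  have hφt : 0 ≤ ψ (y + t • v) := hnonneg _ (hmem t (right_mem_Icc.2 ht.le))
  have hinner_gv : (inner ℝ g v : ℝ) = -‖g‖ := by
    rw [hv, inner_neg_right, real_inner_smul_right, real_inner_self_eq_norm_sq]
    field_simp
  rw [hH, hinner_gv] at hHt
  simp only at hHt
  nlinarith

/-- Błocki's calculus lemma: if `ψ ≥ 0` is differentiable on an open set `Ω ⊆ ℝ^n` with
`M`-Lipschitz gradient (the `C^{1,1}` hypothesis), then `√ψ` is locally Lipschitz in `Ω`,
and at every point where `ψ > 0` the gradient of `√ψ`, namely `|∇ψ|/(2√ψ)`, is bounded by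
`max(|∇ψ|/(2 dist(·,∂Ω)), (1+M)/2)`. -/
theorem blocki_sqrt_lemma (n : ℕ) (Ω : Set (EuclideanSpace ℝ (Fin n)))
    (hΩ : IsOpen Ω) (hne : Ω.Nonempty)
    (ψ : EuclideanSpace ℝ (Fin n) → ℝ)
    (hnonneg : ∀ x ∈ Ω, 0 ≤ ψ x)
    (hdiff : ∀ x ∈ Ω, DifferentiableAt ℝ ψ x)
    (M : ℝ) (hM : 0 ≤ M)
    (hLip : LipschitzOnWith (Real.toNNReal M) (gradient ψ) Ω) :
    (∀ x ∈ Ω, ∃ ε > 0, ∃ C : NNReal,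
      LipschitzOnWith C (fun y => Real.sqrt (ψ y)) (ball x ε ∩ Ω)) ∧
    (∀ x ∈ Ω, 0 < ψ x →
      ‖gradient ψ x‖ / (2 * Real.sqrt (ψ x)) ≤
        max (‖gradient ψ x‖ / (2 * infDist x Ωᶜ)) ((1 + M) / 2)) := by
  have keyA : ∀ y ∈ Ω, ∀ t : ℝ, 0 < t → closedBall y t ⊆ Ω →
      ‖gradient ψ y‖ * t ≤ ψ y + M * t ^ 2 / 2 :=
    fun y hy t ht hb => blocki_keyA hnonneg hdiff hM hLip hy ht hb
  constructor
  ·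
    intro x hx
    obtain ⟨r, hr, hrball⟩ := Metric.isOpen_iff.1 hΩ x hx
    set ε := r / 3 with hεdef
    have hε : 0 < ε := by positivity
    have hsubΩ : closedBall x ε ⊆ Ω := fun z hz =>
      hrball (lt_of_le_of_lt (mem_closedBall.1 hz) (by rw [hεdef]; linarith))
    have hsub2 : ∀ y ∈ ball x ε, closedBall y ε ⊆ Ω := by
      intro y hy z hz
      apply hrball
      have h1 : dist z x ≤ dist z y + dist y x := dist_triangle z y x
      have := mem_closedBall.1 hz
      have := mem_ball.1 hy
      rw [mem_ball]
      rw [hεdef] at *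
      linarith
    -- bound on ψ on the closed ball
    have hcont : ContinuousOn ψ (closedBall x ε) := fun z hz =>
      (hdiff z (hsubΩ hz)).continuousAt.continuousWithinAt
    obtain ⟨z0, hz0, hK'⟩ := (isCompact_closedBall x ε).exists_isMaxOn
      ⟨x, mem_closedBall_self hε.le⟩ hcont
    have hK : ∀ z ∈ closedBall x ε, ψ z ≤ ψ z0 := hK'
    set K := ψ z0 with hKdef
    set C := max ((1 + M) / 2) ((K / ε + M * ε / 2) / (2 * ε)) with hCdef
    have hC1 : (1 + M) / 2 ≤ C := le_max_left _ _
    have hC2 : (K / ε + M * ε / 2) / (2 * ε) ≤ C := le_max_right _ _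
    have hC0 : 0 ≤ C := le_trans (by linarith) hC1
    -- gradient bound
    have hgb : ∀ δ : ℝ, 0 < δ → ∀ y ∈ ball x ε,
        ‖gradient ψ y‖ ≤ 2 * C * Real.sqrt (ψ y + δ) := by
      intro δ hδ y hy
      have hyΩ : y ∈ Ω := hsub2 y hy (mem_closedBall_self hε.le)
      have hψy : 0 ≤ ψ y := hnonneg y hyΩ
      have hψyK : ψ y ≤ K := hK y (ball_subset_closedBall hy)
      set s := Real.sqrt (ψ y + δ) with hsdef
      have hs : 0 < s := Real.sqrt_pos.2 (by linarith)
      have hs2 : s ^ 2 = ψ y + δ := Real.sq_sqrt (by linarith)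
      rcases le_or_gt s ε with hse | hse
      · have h := keyA y hyΩ s hs ((closedBall_subset_closedBall hse).trans (hsub2 y hy))
        nlinarith
      · have h := keyA y hyΩ ε hε (hsub2 y hy)
        have hKε : ‖gradient ψ y‖ ≤ K / ε + M * ε / 2 := by
          have h' : ‖gradient ψ y‖ * ε ≤ K + M * ε ^ 2 / 2 := by linarith
          calc ‖gradient ψ y‖ ≤ (K + M * ε ^ 2 / 2) / ε := (le_div_iff₀ hε).2 h'
            _ = K / ε + M * ε / 2 := by field_simp
        have : (K / ε + M * ε / 2) ≤ 2 * C * ε := by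
          rw [div_le_iff₀ (by linarith : (0:ℝ) < 2 * ε)] at hC2
          linarith
        nlinarith
    -- Lipschitz bound for the regularized sqrt on the ball
    have hlip : ∀ δ : ℝ, 0 < δ → ∀ a ∈ ball x ε, ∀ b ∈ ball x ε,
        ‖Real.sqrt (ψ a + δ) - Real.sqrt (ψ b + δ)‖ ≤ C * ‖a - b‖ := by
      intro δ hδ a ha b hb
      apply Convex.norm_image_sub_le_of_norm_hasFDerivWithin_le
        (f' := fun y => (2 * Real.sqrt (ψ y + δ))⁻¹ • (fderiv ℝ ψ y))
        ?_ ?_ (convex_ball x ε) hb ha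
      · intro y hy
        have hyΩ : y ∈ Ω := hsub2 y hy (mem_closedBall_self hε.le)
        have hψy : 0 ≤ ψ y := hnonneg y hyΩ
        have hne : ψ y + δ ≠ 0 := by linarith
        have h1 : HasDerivAt Real.sqrt (1 / (2 * Real.sqrt (ψ y + δ))) (ψ y + δ) :=
          Real.hasDerivAt_sqrt hne
        have h2 : HasFDerivAt (fun y => ψ y + δ) (fderiv ℝ ψ y) y :=
          ((hdiff y hyΩ).hasFDerivAt).add_const δ
        have := h1.comp_hasFDerivAt y h2
        simp only [one_div] at this
        exact this.hasFDerivWithinAt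
      · intro y hy
        have hyΩ : y ∈ Ω := hsub2 y hy (mem_closedBall_self hε.le)
        have hψy : 0 ≤ ψ y := hnonneg y hyΩ
        have hs : 0 < Real.sqrt (ψ y + δ) := Real.sqrt_pos.2 (by linarith)
        rw [norm_smul]
        have hfg : ‖fderiv ℝ ψ y‖ = ‖gradient ψ y‖ := by
          rw [gradient, LinearIsometryEquiv.norm_map]
        rw [hfg, norm_inv, Real.norm_eq_abs, abs_of_pos (by linarith)]
        rw [inv_mul_le_iff₀ (by linarith)]
        calc ‖gradient ψ y‖ ≤ 2 * C * Real.sqrt (ψ y + δ) := hgb δ hδ y hy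
          _ = 2 * Real.sqrt (ψ y + δ) * C := by ring
    refine ⟨ε, hε, Real.toNNReal C, ?_⟩
    have : LipschitzOnWith (Real.toNNReal C) (fun y => Real.sqrt (ψ y)) (ball x ε) := by
      rw [lipschitzOnWith_iff_dist_le_mul]
      intro a ha b hb
      rw [Real.coe_toNNReal _ hC0]
      have htend : Tendsto (fun δ : ℝ => dist (Real.sqrt (ψ a + δ)) (Real.sqrt (ψ b + δ)))
          (nhdsWithin 0 (Ioi 0)) (nhds (dist (Real.sqrt (ψ a)) (Real.sqrt (ψ b)))) := by
        have h1 : Tendsto (fun δ : ℝ => Real.sqrt (ψ a + δ)) (nhds 0) (nhds (Real.sqrt (ψ a))) := by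
          have hc : Continuous (fun δ : ℝ => Real.sqrt (ψ a + δ)) :=
            Real.continuous_sqrt.comp (continuous_const.add continuous_id)
          simpa using hc.tendsto (0:ℝ)
        have h2 : Tendsto (fun δ : ℝ => Real.sqrt (ψ b + δ)) (nhds 0) (nhds (Real.sqrt (ψ b))) := by
          have hc : Continuous (fun δ : ℝ => Real.sqrt (ψ b + δ)) :=
            Real.continuous_sqrt.comp (continuous_const.add continuous_id)
          simpa using hc.tendsto (0:ℝ)
        exact ((h1.mono_left nhdsWithin_le_nhds).dist (h2.mono_left nhdsWithin_le_nhds))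
      refine le_of_tendsto htend ?_
      filter_upwards [self_mem_nhdsWithin] with δ hδ
      rw [Real.dist_eq, ← Real.norm_eq_abs]
      have := hlip δ hδ a ha b hb
      rwa [← dist_eq_norm a b] at this
    exact this.mono inter_subset_left
  ·
    intro x hx hpos
    set t := Real.sqrt (ψ x) with htdef
    have ht : 0 < t := Real.sqrt_pos.2 hpos
    have ht2 : t ^ 2 = ψ x := Real.sq_sqrt hpos.le
    have main : closedBall x t ⊆ Ω → ‖gradient ψ x‖ / (2 * t) ≤ (1 + M) / 2 := by
      intro hsub
      have h := keyA x hx t ht hsub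
      rw [div_le_div_iff₀ (by linarith) (by norm_num)]
      nlinarith [norm_nonneg (gradient ψ x)]
    by_cases hc : (Ωᶜ : Set (EuclideanSpace ℝ (Fin n))) = ∅
    · refine le_trans (main ?_) (le_max_right _ _)
      intro z _
      by_contra hz
      exact (eq_empty_iff_forall_notMem.1 hc z) hz
    · have hcne : (Ωᶜ : Set (EuclideanSpace ℝ (Fin n))).Nonempty :=
        nonempty_iff_ne_empty.2 hc
      have hd : 0 < infDist x Ωᶜ := by
        rw [← hΩ.isClosed_compl.notMem_iff_infDist_pos hcne]
        exact fun h => h hx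
      rcases lt_or_ge t (infDist x Ωᶜ) with hlt | hle
      · refine le_trans (main ?_) (le_max_right _ _)
        intro z hz
        by_contra hzc
        have hzc' : z ∈ (Ωᶜ : Set (EuclideanSpace ℝ (Fin n))) := hzc
        have := infDist_le_dist_of_mem (x := x) hzc'
        rw [dist_comm] at this
        exact absurd (this.trans (mem_closedBall.1 hz)) (not_le.2 hlt)
      · refine le_trans ?_ (le_max_left _ _)
        apply div_le_div_of_nonneg_left (norm_nonneg _) (by linarith)
        linarith
end

section
/- Let 1 ≤ k ≤ n and let λ ∈ Γ_k ⊂ ℝ^n. Then σ_{k−1}(λ|i) > 0 for every index i ∈ {1,…,n}. (Positivity of the linearized coefficients, i.e. ellipticity of S_k on the cone Γ_k.) -/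
open Finset

namespace EllipticAux

open Polynomial

lemma esymmS_zero (n : ℕ) (lam : Fin n → ℝ) : esymmS n 0 lam = 1 := by
  simp [esymmS, Finset.powersetCard_zero]

lemma esymmDel_zero (n : ℕ) (lam : Fin n → ℝ) (i : Fin n) : esymmDel n 0 lam i = 1 := by
  simp [esymmDel, Finset.powersetCard_zero]

lemma card_erase (n : ℕ) (i : Fin n) : #(Finset.univ.erase i) = n - 1 := by
  rw [Finset.card_erase_of_mem (Finset.mem_univ i), Finset.card_univ, Fintype.card_fin]

lemma eval_nonneg (p : ℝ[X]) (h : ∀ m, 0 ≤ p.coeff m) {x : ℝ} (hx : 0 ≤ x) :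
    0 ≤ p.eval x := by
  rw [eval_eq_sum_range]
  exact Finset.sum_nonneg fun i _ => mul_nonneg (h i) (pow_nonneg hx i)

lemma eval_pos (p : ℝ[X]) (h : ∀ m, 0 ≤ p.coeff m) (h0 : 0 < p.coeff 0) {x : ℝ}
    (hx : 0 ≤ x) : 0 < p.eval x := by
  have h1 : p.eval x = (p.divX).eval x * x + p.coeff 0 := by
    conv_lhs => rw [← p.divX_mul_X_add]
    simp
  have h2 : 0 ≤ (p.divX).eval x :=
    eval_nonneg _ (fun m => by rw [coeff_divX]; exact h _) hx
  nlinarith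

lemma card_roots_le_iterate (p : ℝ[X]) (m : ℕ) :
    Multiset.card p.roots ≤ Multiset.card ((derivative^[m]) p).roots + m := by
  induction m with
  | zero => simp
  | succ m ih =>
      rw [Function.iterate_succ_apply']
      calc Multiset.card p.roots ≤ Multiset.card ((derivative^[m]) p).roots + m := ih
        _ ≤ (Multiset.card (derivative ((derivative^[m]) p)).roots + 1) + m :=
            add_le_add_left (card_roots_le_derivative _) m
        _ = Multiset.card (derivative ((derivative^[m]) p)).roots + (m + 1) := by omega

lemma msum_pos {s : Multiset ℝ} (h : ∀ x ∈ s, 0 < x) (hs : s ≠ 0) : 0 < s.sum := by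
  induction s using Multiset.induction_on with
  | empty => simp at hs
  | cons a t ih =>
    rw [Multiset.sum_cons]
    have ha := h a (Multiset.mem_cons_self a t)
    have ht : 0 ≤ t.sum :=
      Multiset.sum_nonneg fun x hx => (h x (Multiset.mem_cons_of_mem hx)).le
    linarith

lemma coeff_prod_univ (n j : ℕ) (lam : Fin n → ℝ) (hj : j ≤ n) :
    (∏ l : Fin n, (X + C (lam l))).coeff (n - j) = esymmS n j lam := by
  have hc : #(Finset.univ : Finset (Fin n)) = n := by
    rw [Finset.card_univ, Fintype.card_fin]
  rw [Finset.prod_X_add_C_coeff _ lam (by omega : n - j ≤ #(Finset.univ : Finset (Fin n)))]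
  rw [esymmS]
  congr 2
  omega

lemma coeff_prod_erase (n j : ℕ) (lam : Fin n → ℝ) (i : Fin n) (hj : j ≤ n - 1) :
    (∏ l ∈ Finset.univ.erase i, (X + C (lam l))).coeff (n - 1 - j) = esymmDel n j lam i := by
  have hc : #(Finset.univ.erase i) = n - 1 := card_erase n i
  rw [Finset.prod_X_add_C_coeff _ lam (by omega : n - 1 - j ≤ #(Finset.univ.erase i))]
  rw [esymmDel]
  congr 2
  omega

lemma sum_prod_one {α : Type*} [DecidableEq α] (s : Finset α) (j : ℕ) (f : α → ℝ)
    (hf : ∀ l, f l = 1) :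
    ∑ t ∈ s.powersetCard j, ∏ l ∈ t, f l = ((#s).choose j : ℝ) := by
  calc ∑ t ∈ s.powersetCard j, ∏ l ∈ t, f l
      = ∑ t ∈ s.powersetCard j, (1 : ℝ) :=
        Finset.sum_congr rfl fun t _ => Finset.prod_eq_one fun l _ => hf l
    _ = (#(s.powersetCard j) : ℝ) := by rw [Finset.sum_const, nsmul_eq_mul, mul_one]
    _ = ((#s).choose j : ℝ) := by rw [Finset.card_powersetCard]


lemma nonvanish (n k : ℕ) (hk2 : 2 ≤ k) (hkn : k ≤ n) (nu : Fin n → ℝ) (i : Fin n)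
    (hS : 0 < esymmS n k nu)
    (hlow : ∀ j, j ≤ k - 2 → 0 < esymmDel n j nu i) :
    esymmDel n (k - 1) nu i ≠ 0 := by
  intro h0
  set p : ℝ[X] := ∏ l ∈ Finset.univ.erase i, (X + C (nu l)) with hp
  have hcard : #(Finset.univ.erase i) = n - 1 := card_erase n i
  have hfull : (∏ l : Fin n, (X + C (nu l))) = (X + C (nu i)) * p :=
    (Finset.mul_prod_erase Finset.univ _ (Finset.mem_univ i)).symm
  rcases eq_or_lt_of_le hkn with hkeq | hklt
  · -- k = n : direct contradiction
    subst hkeq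
    have h1 : esymmS k k nu = (∏ l : Fin k, (X + C (nu l))).coeff 0 := by
      have := coeff_prod_univ k k nu le_rfl
      simpa using this.symm
    have h2 : p.coeff 0 = esymmDel k (k - 1) nu i := by
      have := coeff_prod_erase k (k - 1) nu i le_rfl
      simpa [Nat.sub_self] using this
    rw [h1, hfull, mul_coeff_zero] at hS
    simp only [coeff_add, coeff_X_zero, coeff_C_zero, zero_add] at hS
    rw [h2, h0, mul_zero] at hS
    exact lt_irrefl _ hS
  · -- k < n
    obtain ⟨m, hm⟩ : ∃ m, n - 1 = k + m := ⟨n - 1 - k, by omega⟩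
    -- coefficients of p
    have hpc : ∀ j ≤ k, p.coeff (j + m) = esymmDel n (k - j) nu i := by
      intro j hj
      have := coeff_prod_erase n (k - j) nu i (by omega)
      rw [show n - 1 - (k - j) = j + m by omega] at this
      exact this
    -- the deletion identity: esymmDel n k nu i = esymmS n k nu > 0
    have hSk : esymmS n k nu = (∏ l : Fin n, (X + C (nu l))).coeff (m + 1) := by
      have := coeff_prod_univ n k nu hkn
      rw [show n - k = m + 1 by omega] at this
      exact this.symm
    have hdel : 0 < esymmDel n k nu i := by
      have e1 : p.coeff (m + 1) = 0 := by
        have h := hpc 1 (by omega)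
        rw [show (1 : ℕ) + m = m + 1 by omega] at h
        rw [h]; exact h0
      have e2 : p.coeff m = esymmDel n k nu i := by
        have := hpc 0 (by omega); simpa using this
      have : (∏ l : Fin n, (X + C (nu l))).coeff (m + 1) = p.coeff m := by
        rw [hfull, add_mul, coeff_add, coeff_X_mul, coeff_C_mul, e1, mul_zero, add_zero]
      rw [hSk, this, e2] at hS
      exact hS
    -- degree and roots of p
    have hmon : ∀ l ∈ Finset.univ.erase i, (X + C (nu l)).Monic :=
      fun l _ => monic_X_add_C _
    have hdeg : p.natDegree = k + m := by
      rw [hp, natDegree_prod_of_monic _ _ hmon]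
      simp only [natDegree_X_add_C, Finset.sum_const, smul_eq_mul, mul_one, hcard]
      omega
    have hsplit : p.Splits := by
      rw [hp]
      exact Splits.prod fun l _ =>
        Splits.of_degree_le_one (le_of_eq (degree_X_add_C _))
    have hrootsp : Multiset.card p.roots = k + m := by
      rw [← hdeg]
      exact (splits_iff_card_roots.mp hsplit)
    -- q := m-th derivative
    set q : ℝ[X] := (derivative^[m]) p with hq
    have hqc : ∀ j, q.coeff j = ((j + m).descFactorial m : ℝ) * p.coeff (j + m) := by
      intro j
      rw [hq, coeff_iterate_derivative, nsmul_eq_mul]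
    have hqdeg_le : q.natDegree ≤ k := by
      have h := natDegree_iterate_derivative p m
      rw [← hq] at h
      omega
    have hqroots_ge : k ≤ Multiset.card q.roots := by
      have h := card_roots_le_iterate p m
      rw [← hq, hrootsp] at h
      omega
    have hqroots : Multiset.card q.roots = k := le_antisymm ((q.card_roots').trans hqdeg_le) hqroots_ge
    have hqdeg : q.natDegree = k := le_antisymm hqdeg_le (hqroots ▸ q.card_roots')
    have hqsplit : q.Splits := splits_iff_card_roots.mpr (by rw [hqroots, hqdeg])
    -- descFactorial positivity
    have hdesc : ∀ j : ℕ, (0 : ℝ) < ((j + m).descFactorial m : ℝ) := by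
      intro j
      have : 0 < (j + m).descFactorial m := by
        apply Nat.pos_of_ne_zero
        intro h
        rw [Nat.descFactorial_eq_zero_iff_lt] at h
        omega
      exact_mod_cast this
    -- coefficient signs of q
    have hq0 : 0 < q.coeff 0 := by
      have h := hpc 0 (by omega)
      rw [hqc 0, h, show k - 0 = k by omega]
      exact mul_pos (hdesc 0) hdel
    have hq1 : q.coeff 1 = 0 := by
      rw [hqc 1]
      have := hpc 1 (by omega)
      rw [this, h0, mul_zero]
    have hqnn : ∀ j, 0 ≤ q.coeff j := by
      intro j
      rcases lt_or_ge k j with hj | hj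
      · rw [coeff_eq_zero_of_natDegree_lt (by omega : q.natDegree < j)]
      · rcases Nat.eq_zero_or_pos j with rfl | hj0
        · exact hq0.le
        · rcases eq_or_lt_of_le (show 1 ≤ j from hj0) with hj1 | hj2
          · rw [← hj1, hq1]
          · -- 2 ≤ j ≤ k
            rw [hqc j, hpc j hj]
            exact (mul_pos (hdesc j) (hlow (k - j) (by omega))).le
    have hqne : q ≠ 0 := fun h => by simp [h] at hq0
    -- all roots are negative
    have hneg : ∀ r ∈ q.roots, r < 0 := by
      intro r hr
      by_contra hcon
      push_neg at hcon
      have h1 : q.eval r = 0 := isRoot_of_mem_roots hr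
      have h2 : 0 < q.eval r := eval_pos q hqnn hq0 hcon
      rw [h1] at h2; exact lt_irrefl _ h2
    -- leading coefficient positive
    have hlead : 0 < q.leadingCoeff := by
      rw [leadingCoeff, hqdeg, hqc k, hpc k le_rfl, show k - k = 0 by omega, esymmDel_zero]
      simpa using hdesc k
    -- Vieta on q's roots: coefficient 1 is positive, contradiction with hq1
    have hfact : q = C q.leadingCoeff * (q.roots.map fun a => X - C a).prod :=
      hqsplit.eq_prod_roots
    have hco1 : q.coeff 1 =
        q.leadingCoeff * ((-1) ^ (k - 1) * q.roots.esymm (k - 1)) := by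
      conv_lhs => rw [hfact]
      rw [coeff_C_mul, Multiset.prod_X_sub_C_coeff q.roots (by rw [hqroots]; omega), hqroots]
    have hpos : 0 < (-1 : ℝ) ^ (k - 1) * q.roots.esymm (k - 1) := by
      have hne : ((-1 : ℝ)) ^ (k-1) * q.roots.esymm (k-1)
          = (Multiset.map Neg.neg q.roots).esymm (k - 1) := (Multiset.esymm_neg _ _).symm
      rw [hne]
      rw [Multiset.esymm]
      apply msum_pos
      · intro x hx
        obtain ⟨t, ht, rfl⟩ := Multiset.mem_map.mp hx
        have ht' := Multiset.mem_powersetCard.mp ht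
        apply Multiset.prod_pos
        intro a ha
        have := Multiset.mem_of_le ht'.1 ha
        obtain ⟨r, hr, rfl⟩ := Multiset.mem_map.mp this
        simpa using hneg r hr
      · intro h
        have hc := congrArg Multiset.card h
        rw [Multiset.card_map, Multiset.card_powersetCard, Multiset.card_map, hqroots] at hc
        simp only [Multiset.card_zero] at hc
        have := Nat.choose_pos (show k - 1 ≤ k by omega)
        omega
    have : (0:ℝ) < q.leadingCoeff * ((-1) ^ (k - 1) * q.roots.esymm (k - 1)) :=
      mul_pos hlead hpos
    rw [← hco1, hq1] at this
    exact lt_irrefl _ this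


lemma esymmS_smul (n j : ℕ) (c : ℝ) (lam : Fin n → ℝ) :
    esymmS n j (fun l => c * lam l) = c ^ j * esymmS n j lam := by
  rw [esymmS, esymmS, Finset.mul_sum]
  apply Finset.sum_congr rfl
  intro t ht
  have hcard : #t = j := (Finset.mem_powersetCard.mp ht).2
  rw [Finset.prod_mul_distrib, Finset.prod_const, hcard]

lemma gamma_path (n k : ℕ) (hkn : k ≤ n) (lam : Fin n → ℝ) (hlam : GammaCone n k lam)
    {s : ℝ} (hs0 : 0 ≤ s) (hs1 : s ≤ 1) :
    GammaCone n k (fun l => (1 - s) * lam l + s) := by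
  intro j hj1 hjk
  rcases eq_or_lt_of_le hs1 with heq | hlt
  · subst heq
    have h1 : esymmS n j (fun l => (1 - 1) * lam l + 1) = ((n.choose j : ℕ) : ℝ) := by
      rw [esymmS, sum_prod_one _ _ _ (fun l => by ring), Finset.card_univ, Fintype.card_fin]
    rw [h1]
    exact_mod_cast Nat.choose_pos (hjk.trans hkn)
  · have hc : 0 < 1 - s := by linarith
    set P0 : ℝ[X] := ∏ l : Fin n, (X + C ((1 - s) * lam l)) with hP0
    have hP0deg : P0.natDegree = n := by
      rw [hP0, natDegree_prod_of_monic _ _ (fun l _ => monic_X_add_C _)]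
      simp only [natDegree_X_add_C, Finset.sum_const, smul_eq_mul, mul_one,
        Finset.card_univ, Fintype.card_fin]
    have hP0coeff : ∀ j' : ℕ, j' ≤ n →
        P0.coeff (n - j') = (1 - s) ^ j' * esymmS n j' lam := by
      intro j' hj'
      rw [hP0, coeff_prod_univ n j' _ hj', esymmS_smul]
    -- the shifted product is the Taylor expansion of P0 at s
    have htaylor : (∏ l : Fin n, (X + C ((1 - s) * lam l + s))) = taylor s P0 := by
      rw [taylor_apply, hP0, Polynomial.prod_comp]
      apply Finset.prod_congr rfl
      intro l _
      rw [add_comp, X_comp, C_comp, C_add]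
      ring
    have key : esymmS n j (fun l => (1 - s) * lam l + s)
        = (hasseDeriv (n - j) P0).eval s := by
      rw [← coeff_prod_univ n j _ (hjk.trans hkn), htaylor, taylor_coeff]
    rw [key]
    apply eval_pos
    · intro t
      rw [hasseDeriv_coeff]
      rcases le_or_gt t j with ht | ht
      · have : t + (n - j) = n - (j - t) := by omega
        rw [this, hP0coeff (j - t) (by omega)]
        rcases Nat.eq_zero_or_pos (j - t) with h' | h'
        · rw [h', esymmS_zero]
          positivity
        · have := hlam (j - t) h' (by omega)
          positivity
      · rw [coeff_eq_zero_of_natDegree_lt (by omega : P0.natDegree < t + (n - j)),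
          mul_zero]
    · rw [hasseDeriv_coeff, zero_add, Nat.choose_self, hP0coeff j (hjk.trans hkn)]
      have := hlam j hj1 hjk
      positivity
    · exact hs0

lemma main_aux : ∀ k : ℕ, 1 ≤ k → ∀ n : ℕ, k ≤ n → ∀ lam : Fin n → ℝ,
    GammaCone n k lam → ∀ i : Fin n, 0 < esymmDel n (k - 1) lam i := by
  intro k
  induction k using Nat.strong_induction_on with
  | _ k IH =>
    intro hk1 n hkn lam hlam i
    rcases eq_or_lt_of_le hk1 with h1 | hk2
    · rw [← h1, Nat.sub_self, esymmDel_zero]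
      norm_num
    · -- 2 ≤ k
      have hγmem : ∀ s : ℝ, 0 ≤ s → s ≤ 1 →
          GammaCone n k (fun l => (1 - s) * lam l + s) :=
        fun s h h' => gamma_path n k hkn lam hlam h h'
      have hne : ∀ s : ℝ, 0 ≤ s → s ≤ 1 →
          esymmDel n (k - 1) (fun l => (1 - s) * lam l + s) i ≠ 0 := by
        intro s h h'
        apply nonvanish n k hk2 hkn _ i
        · exact hγmem s h h' k hk1 le_rfl
        · intro j hj
          rcases Nat.eq_zero_or_pos j with rfl | hj1
          · rw [esymmDel_zero]; norm_num
          · have hlt : j + 1 < k := by omega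
            have := IH (j + 1) hlt (by omega) n (by omega) _
              (fun j' a b => hγmem s h h' j' a (by omega)) i
            simpa using this
      have hcont : Continuous fun s : ℝ =>
          esymmDel n (k - 1) (fun l => (1 - s) * lam l + s) i := by
        unfold esymmDel
        refine continuous_finset_sum _ fun t _ => continuous_finset_prod _ fun l _ => ?_
        fun_prop
      have hf1 : 0 < esymmDel n (k - 1) (fun l => (1 - (1:ℝ)) * lam l + 1) i := by
        rw [esymmDel, sum_prod_one _ _ _ (fun l => by ring), card_erase]
        exact_mod_cast Nat.choose_pos (by omega : k - 1 ≤ n - 1)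
      by_contra hcon
      push_neg at hcon
      have h0le : esymmDel n (k - 1) (fun l => (1 - (0:ℝ)) * lam l + 0) i ≤ 0 := by
        have : (fun l => (1 - (0:ℝ)) * lam l + 0) = lam := by funext l; ring
        rw [this]; exact hcon
      have hmem : (0 : ℝ) ∈ Set.Icc
          (esymmDel n (k - 1) (fun l => (1 - (0:ℝ)) * lam l + 0) i)
          (esymmDel n (k - 1) (fun l => (1 - (1:ℝ)) * lam l + 1) i) := ⟨h0le, hf1.le⟩
      obtain ⟨c, hc, hc0⟩ := intermediate_value_Icc (zero_le_one) hcont.continuousOn hmem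
      exact hne c hc.1 hc.2 hc0


end EllipticAux

/-- Ellipticity of `S_k` on the cone `Γ_k`: the linearized coefficients are positive. -/
theorem esymmDel_pos (n k : ℕ) (hk : 1 ≤ k) (hkn : k ≤ n)
    (lam : Fin n → ℝ) (hlam : GammaCone n k lam) (i : Fin n) :
    0 < esymmDel n (k - 1) lam i :=
  EllipticAux.main_aux k hk n hkn lam hlam i
end

section
/- Let 1 ≤ k ≤ n and let λ ∈ ℝ^n satisfy S_j(λ) ≥ 0 for all j = 1,…,k (i.e. λ lies in the closure of Γ_k). Then for every t > 0, S_k(λ + t·𝟙) > S_k(λ), where 𝟙 = (1,1,…,1) ∈ ℝ^n. (Strict monotonicity of S_k under a uniform positive shift on the closed cone; this is inequality (4.4) in the paper's Lemma 4.1.) -/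
open Finset

/-- Number of `k`-subsets of `univ : Finset (Fin n)` containing a fixed set `u` of
cardinality `j ≤ k` is `(n-j).choose (k-j)`. -/
lemma count_supersets (n k : ℕ) (u : Finset (Fin n)) (huk : u.card ≤ k) :
    (((Finset.univ : Finset (Fin n)).powersetCard k).filter (fun s => u ⊆ s)).card
      = (n - u.card).choose (k - u.card) := by
  have h1 : (((Finset.univ : Finset (Fin n)).powersetCard k).filter (fun s => u ⊆ s)).card
      = (((Finset.univ : Finset (Fin n)) \ u).powersetCard (k - u.card)).card := by
    apply Finset.card_nbij' (fun s => s \ u) (fun w => w ∪ u)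
    · intro s hs
      simp only [mem_coe, mem_filter, mem_powersetCard] at hs
      rcases hs with ⟨⟨_, hcard⟩, hus⟩
      simp only [mem_coe, mem_powersetCard]
      constructor
      · exact sdiff_subset_sdiff (subset_univ s) le_rfl
      · rw [card_sdiff_of_subset hus, hcard]
    · intro w hw
      simp only [mem_coe, mem_powersetCard] at hw
      rcases hw with ⟨hwsub, hwcard⟩
      have hdisj : Disjoint w u := by
        exact disjoint_of_subset_left hwsub (sdiff_disjoint)
      simp only [mem_coe, mem_filter, mem_powersetCard]
      refine ⟨⟨subset_univ _, ?_⟩, subset_union_right⟩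
      rw [card_union_of_disjoint hdisj, hwcard]
      omega
    · intro s hs
      simp only [mem_coe, mem_filter, mem_powersetCard] at hs
      exact sdiff_union_of_subset hs.2
    · intro w hw
      simp only [mem_coe, mem_powersetCard] at hw
      have hdisj : Disjoint w u := disjoint_of_subset_left hw.1 (sdiff_disjoint)
      dsimp only; rw [union_sdiff_right, sdiff_eq_self_of_disjoint hdisj]
  rw [h1, Finset.card_powersetCard, card_sdiff_of_subset (subset_univ u), card_univ, Fintype.card_fin]

/-- `S_0 = 1`. -/
lemma esymmS_zero (n : ℕ) (lam : Fin n → ℝ) : esymmS n 0 lam = 1 := by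
  simp [esymmS, Finset.powersetCard_zero]

/-- Expansion of `S_k(λ + t·𝟙)` in terms of `S_j(λ)`. -/
lemma esymmS_shift_expand (n k : ℕ) (lam : Fin n → ℝ) (t : ℝ) :
    esymmS n k (fun i => lam i + t)
      = ∑ j ∈ Finset.range (n + 1),
          (if j ≤ k then ((n - j).choose (k - j) : ℝ) * t ^ (k - j) else 0)
            * esymmS n j lam := by
  unfold esymmS
  have step1 : ∑ s ∈ (Finset.univ : Finset (Fin n)).powersetCard k, ∏ i ∈ s, (lam i + t)
      = ∑ s ∈ (Finset.univ : Finset (Fin n)).powersetCard k,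
          ∑ u ∈ s.powerset, (∏ i ∈ u, lam i) * t ^ (k - u.card) := by
    apply Finset.sum_congr rfl
    intro s hs
    simp only [mem_powersetCard] at hs
    rw [Finset.prod_add]
    apply Finset.sum_congr rfl
    intro u hu
    simp only [mem_powerset] at hu
    rw [Finset.prod_const, card_sdiff_of_subset hu, hs.2]
  rw [step1]
  have step2 : ∑ s ∈ (Finset.univ : Finset (Fin n)).powersetCard k,
          ∑ u ∈ s.powerset, (∏ i ∈ u, lam i) * t ^ (k - u.card)
      = ∑ u ∈ (Finset.univ : Finset (Fin n)).powerset,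
          ∑ _s ∈ ((Finset.univ : Finset (Fin n)).powersetCard k).filter (fun s => u ⊆ s),
            (∏ i ∈ u, lam i) * t ^ (k - u.card) := by
    apply Finset.sum_comm'
    intro s u
    simp only [mem_powersetCard, mem_powerset, mem_filter]
    constructor
    · rintro ⟨⟨h1, h2⟩, h3⟩; exact ⟨⟨⟨h1, h2⟩, h3⟩, subset_univ _⟩
    · rintro ⟨⟨h1, h3⟩, _⟩; exact ⟨h1, h3⟩
  rw [step2]
  have step3 : ∀ u ∈ (Finset.univ : Finset (Fin n)).powerset,
      ∑ _s ∈ ((Finset.univ : Finset (Fin n)).powersetCard k).filter (fun s => u ⊆ s),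
            (∏ i ∈ u, lam i) * t ^ (k - u.card)
      = (if u.card ≤ k then ((n - u.card).choose (k - u.card) : ℝ) * t ^ (k - u.card) else 0)
          * ∏ i ∈ u, lam i := by
    intro u _
    rw [Finset.sum_const, nsmul_eq_mul]
    by_cases hcase : u.card ≤ k
    · rw [count_supersets n k u hcase, if_pos hcase]; ring
    · rw [if_neg hcase]
      have : ((Finset.univ : Finset (Fin n)).powersetCard k).filter (fun s => u ⊆ s) = ∅ := by
        apply Finset.filter_false_of_mem
        intro s hs hus
        simp only [mem_powersetCard] at hs
        exact hcase (hs.2 ▸ Finset.card_le_card hus)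
      rw [this]; simp
  rw [Finset.sum_congr rfl step3]
  rw [Finset.powerset_card_disjiUnion]
  refine (Finset.sum_disjiUnion _ _ _).trans ?_
  rw [card_univ, Fintype.card_fin]
  apply Finset.sum_congr rfl
  intro j _
  rw [Finset.mul_sum]
  apply Finset.sum_congr rfl
  intro u hu
  simp only [mem_powersetCard] at hu
  rw [hu.2]

/-- Strict monotonicity of `S_k` under a uniform positive shift, on the closure of `Γ_k`. -/
theorem esymm_strict_mono_shift (n k : ℕ) (hk : 1 ≤ k) (hkn : k ≤ n)
    (lam : Fin n → ℝ) (hlam : ∀ j : ℕ, 1 ≤ j → j ≤ k → 0 ≤ esymmS n j lam)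
    (t : ℝ) (ht : 0 < t) :
    esymmS n k lam < esymmS n k (fun i => lam i + t) := by
  rw [esymmS_shift_expand n k lam t]
  set a : ℕ → ℝ := fun j =>
    (if j ≤ k then ((n - j).choose (k - j) : ℝ) * t ^ (k - j) else 0) * esymmS n j lam with ha
  have hnonneg : ∀ j ∈ Finset.range (n + 1), j ∉ ({0, k} : Finset ℕ) → 0 ≤ a j := by
    intro j _ hj
    simp only [Finset.mem_insert, Finset.mem_singleton] at hj
    push_neg at hj
    by_cases hjk : j ≤ k
    · have hj1 : 1 ≤ j := by omega
      have hjk' : j ≤ k := hjk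
      simp only [ha, if_pos hjk]
      apply mul_nonneg
      · exact mul_nonneg (Nat.cast_nonneg _) (pow_nonneg ht.le _)
      · exact hlam j hj1 hjk'
    · simp [ha, if_neg hjk]
  have hsub : ({0, k} : Finset ℕ) ⊆ Finset.range (n + 1) := by
    intro x hx
    simp only [Finset.mem_insert, Finset.mem_singleton] at hx
    rcases hx with rfl | rfl <;> simp [Finset.mem_range] <;> omega
  have hge : ∑ j ∈ ({0, k} : Finset ℕ), a j ≤ ∑ j ∈ Finset.range (n + 1), a j :=
    Finset.sum_le_sum_of_subset_of_nonneg hsub hnonneg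
  have hpair : ∑ j ∈ ({0, k} : Finset ℕ), a j = a 0 + a k := by
    rw [Finset.sum_pair (by omega : (0 : ℕ) ≠ k)]
  have ha0 : a 0 = ((n.choose k : ℝ)) * t ^ k := by
    simp [ha, esymmS_zero]
  have hak : a k = esymmS n k lam := by
    simp [ha]
  have hpos : 0 < a 0 := by
    rw [ha0]
    apply mul_pos _ (pow_pos ht k)
    exact_mod_cast Nat.cast_pos.mpr (Nat.choose_pos hkn)
  calc esymmS n k lam < a 0 + a k := by rw [hak]; linarith
    _ = ∑ j ∈ ({0, k} : Finset ℕ), a j := hpair.symm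
    _ ≤ ∑ j ∈ Finset.range (n + 1), a j := hge
end

section
/- Let 2 ≤ k ≤ n, let 0 < δ ≤ 1/2, and let λ ∈ Γ_k ⊂ ℝ^n with λ_1 = max_i λ_i. Suppose p ≠ 1 is an index such that λ_p ≥ −δ·λ_1 and σ_{k−1}(λ|p) ≥ δ^{−1}·σ_{k−1}(λ|1). Then (2δ·λ_1 + (1−2δ)·λ_p) · σ_{k−1}(λ|p) ≥ λ_1 · σ_{k−1}(λ|1). -/
set_option maxHeartbeats 1000000

open Finset

namespace HMW

variable {ι : Type*} [DecidableEq ι]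

noncomputable def E (w : ι → ℝ) (T : Finset ι) (m : ℕ) : ℝ :=
  ∑ s ∈ T.powersetCard m, ∏ i ∈ s, w i

lemma E_zero (w : ι → ℝ) (T : Finset ι) : E w T 0 = 1 := by
  simp [E]

lemma E_of_card_lt {T : Finset ι} {m : ℕ} (h : T.card < m) (w : ι → ℝ) : E w T m = 0 := by
  rw [E, powersetCard_eq_empty.2 h, sum_empty]

lemma E_succ {T : Finset ι} {i : ι} (hi : i ∈ T) (w : ι → ℝ) (m : ℕ) :
    E w T (m + 1) = w i * E w (T.erase i) m + E w (T.erase i) (m + 1) := by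
  have hins : T = insert i (T.erase i) := (insert_erase hi).symm
  have hnm : i ∉ T.erase i := notMem_erase i T
  have hdis : Disjoint ((T.erase i).powersetCard (m + 1))
      (((T.erase i).powersetCard m).image (insert i)) := by
    rw [disjoint_left]
    intro s hs hs'
    have his : i ∉ s := fun h => hnm ((mem_powersetCard.1 hs).1 h)
    obtain ⟨u, _, rfl⟩ := mem_image.1 hs'
    exact his (mem_insert_self i u)
  have hinj : ∀ u ∈ (T.erase i).powersetCard m, ∀ v ∈ (T.erase i).powersetCard m,
      insert i u = insert i v → u = v := by
    intro u hu v hv huv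
    have hiu : i ∉ u := fun h => hnm ((mem_powersetCard.1 hu).1 h)
    have hiv : i ∉ v := fun h => hnm ((mem_powersetCard.1 hv).1 h)
    rw [← erase_insert hiu, ← erase_insert hiv, huv]
  calc E w T (m + 1)
      = ∑ s ∈ (insert i (T.erase i)).powersetCard (m + 1), ∏ x ∈ s, w x := by rw [← hins]; rfl
    _ = ∑ s ∈ (T.erase i).powersetCard (m + 1), ∏ x ∈ s, w x
        + ∑ u ∈ (T.erase i).powersetCard m, ∏ x ∈ insert i u, w x := by
        rw [powersetCard_succ_insert hnm, sum_union hdis, sum_image hinj]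
    _ = w i * E w (T.erase i) m + E w (T.erase i) (m + 1) := by
        rw [E, E, mul_sum, add_comm]
        congr 1
        refine sum_congr rfl fun u hu => ?_
        have hiu : i ∉ u := fun h => hnm ((mem_powersetCard.1 hu).1 h)
        rw [prod_insert hiu]

lemma sum_mul_E_erase (w : ι → ℝ) (T : Finset ι) (m : ℕ) :
    ∑ l ∈ T, w l * E w (T.erase l) m = ((m : ℝ) + 1) * E w T (m + 1) := by
  calc ∑ l ∈ T, w l * E w (T.erase l) m
      = ∑ l ∈ T, ∑ u ∈ (T.erase l).powersetCard m, w l * ∏ x ∈ u, w x := by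
        refine sum_congr rfl fun l _ => ?_
        rw [E, mul_sum]
    _ = ∑ u ∈ T.powersetCard m, ∑ l ∈ T \ u, w l * ∏ x ∈ u, w x := by
        refine sum_comm' fun l u => ?_
        simp only [mem_powersetCard, subset_erase, mem_sdiff]
        tauto
    _ = ∑ p ∈ (T.powersetCard m).sigma (fun u => T \ u), w p.2 * ∏ x ∈ p.1, w x := by
        rw [sum_sigma]
    _ = ∑ p ∈ (T.powersetCard (m + 1)).sigma (fun s => s), w p.2 * ∏ x ∈ p.1.erase p.2, w x := by
        refine sum_bij' (fun p _ => ⟨insert p.2 p.1, p.2⟩) (fun p _ => ⟨p.1.erase p.2, p.2⟩)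
          ?_ ?_ ?_ ?_ ?_
        · rintro ⟨u, l⟩ hp
          rw [mem_sigma] at hp ⊢
          obtain ⟨hu, hl⟩ := hp
          rw [mem_powersetCard] at hu
          rw [mem_sdiff] at hl
          refine ⟨mem_powersetCard.2 ⟨insert_subset hl.1 hu.1, ?_⟩, mem_insert_self _ _⟩
          rw [card_insert_of_notMem hl.2, hu.2]
        · rintro ⟨s, l⟩ hp
          rw [mem_sigma] at hp ⊢
          obtain ⟨hs, hl⟩ := hp
          rw [mem_powersetCard] at hs
          refine ⟨mem_powersetCard.2 ⟨(erase_subset l s).trans hs.1, ?_⟩, mem_sdiff.2 ⟨hs.1 hl, notMem_erase l s⟩⟩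
          rw [card_erase_of_mem hl, hs.2]
          omega
        · rintro ⟨u, l⟩ hp
          rw [mem_sigma, mem_sdiff] at hp
          simp only [erase_insert hp.2.2]
        · rintro ⟨s, l⟩ hp
          rw [mem_sigma] at hp
          simp only [insert_erase hp.2]
        · rintro ⟨u, l⟩ hp
          rw [mem_sigma, mem_sdiff] at hp
          simp only [erase_insert hp.2.2]
    _ = ∑ s ∈ T.powersetCard (m + 1), ∑ l ∈ s, w l * ∏ x ∈ s.erase l, w x := by
        rw [sum_sigma]
    _ = ∑ s ∈ T.powersetCard (m + 1), ((m : ℝ) + 1) * ∏ x ∈ s, w x := by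
        refine sum_congr rfl fun s hs => ?_
        have hsc : s.card = m + 1 := (mem_powersetCard.1 hs).2
        calc ∑ l ∈ s, w l * ∏ x ∈ s.erase l, w x
            = ∑ l ∈ s, ∏ x ∈ s, w x := sum_congr rfl fun l hl => mul_prod_erase s w hl
          _ = ((m : ℝ) + 1) * ∏ x ∈ s, w x := by
              rw [sum_const, hsc, nsmul_eq_mul]
              push_cast
              ring
    _ = ((m : ℝ) + 1) * E w T (m + 1) := by rw [E, mul_sum]

lemma filter_superset_empty {T u : Finset ι} {m : ℕ} (h : m < u.card) :
    (T.powersetCard m).filter (fun s => u ⊆ s) = ∅ := by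
  rw [filter_eq_empty_iff]
  intro s hs hus
  have := card_le_card hus
  rw [(mem_powersetCard.1 hs).2] at this
  omega

lemma card_filter_superset {T u : Finset ι} (hu : u ⊆ T) {m : ℕ} (hum : u.card ≤ m) :
    ((T.powersetCard m).filter (fun s => u ⊆ s)).card = (T.card - u.card).choose (m - u.card) := by
  have h1 : ((T.powersetCard m).filter (fun s => u ⊆ s)).card
      = ((T \ u).powersetCard (m - u.card)).card := by
    refine card_bij' (fun s _ => s \ u) (fun v _ => v ∪ u) ?_ ?_ ?_ ?_
    · intro s hs
      rw [mem_filter, mem_powersetCard] at hs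
      refine mem_powersetCard.2 ⟨sdiff_subset_sdiff hs.1.1 (Subset.refl u), ?_⟩
      rw [card_sdiff_of_subset hs.2, hs.1.2]
    · intro v hv
      rw [mem_powersetCard] at hv
      have hvT : v ⊆ T \ u := hv.1
      have hdis : Disjoint v u := by
        rw [disjoint_left]
        exact fun x hx => (mem_sdiff.1 (hvT hx)).2
      rw [mem_filter, mem_powersetCard]
      refine ⟨⟨union_subset ((hvT.trans (sdiff_subset))) hu, ?_⟩, subset_union_right⟩
      rw [card_union_of_disjoint hdis, hv.2]
      omega
    · intro s hs
      rw [mem_filter] at hs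
      exact sdiff_union_of_subset hs.2
    · intro v hv
      rw [mem_powersetCard] at hv
      have hdis : Disjoint v u := by
        rw [disjoint_left]
        exact fun x hx => (mem_sdiff.1 (hv.1 hx)).2
      show (v ∪ u) \ u = v
      rw [union_sdiff_right, sdiff_eq_self_of_disjoint hdis]
  rw [h1, card_powersetCard, card_sdiff_of_subset hu]
lemma E_shift (w : ι → ℝ) (T : Finset ι) {m : ℕ} (hm : m ≤ T.card) (t : ℝ) :
    E (fun i => w i + t) T m
      = ∑ j ∈ range (m + 1), ((T.card - j).choose (m - j) : ℝ) * t ^ (m - j) * E w T j := by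
  have step1 : E (fun i => w i + t) T m
      = ∑ s ∈ T.powersetCard m, ∑ u ∈ s.powerset, (∏ x ∈ u, w x) * t ^ (m - u.card) := by
    rw [E]
    refine sum_congr rfl fun s hs => ?_
    obtain ⟨hsT, hsc⟩ := mem_powersetCard.1 hs
    rw [prod_add]
    refine sum_congr rfl fun u hu => ?_
    rw [prod_const, card_sdiff_of_subset (mem_powerset.1 hu), hsc]
  have step2 : ∑ s ∈ T.powersetCard m, ∑ u ∈ s.powerset, (∏ x ∈ u, w x) * t ^ (m - u.card)
      = ∑ u ∈ T.powerset, ∑ s ∈ (T.powersetCard m).filter (fun s => u ⊆ s),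
          (∏ x ∈ u, w x) * t ^ (m - u.card) := by
    refine sum_comm' fun s u => ?_
    simp only [mem_powersetCard, mem_powerset, mem_filter]
    constructor
    · rintro ⟨⟨hsT, hsc⟩, hus⟩
      exact ⟨⟨⟨hsT, hsc⟩, hus⟩, hus.trans hsT⟩
    · rintro ⟨⟨⟨hsT, hsc⟩, hus⟩, _⟩
      exact ⟨⟨hsT, hsc⟩, hus⟩
  have step3 : ∑ u ∈ T.powerset, ∑ s ∈ (T.powersetCard m).filter (fun s => u ⊆ s),
          (∏ x ∈ u, w x) * t ^ (m - u.card)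
      = ∑ j ∈ range (T.card + 1), ∑ u ∈ T.powersetCard j,
          (((T.powersetCard m).filter (fun s => u ⊆ s)).card : ℝ)
            * ((∏ x ∈ u, w x) * t ^ (m - u.card)) := by
    rw [powerset_card_biUnion, sum_biUnion (fun i _ j _ hij => pairwise_disjoint_powersetCard T hij)]
    refine sum_congr rfl fun j _ => sum_congr rfl fun u _ => ?_
    rw [sum_const, nsmul_eq_mul]
  have step4 : ∑ j ∈ range (T.card + 1), ∑ u ∈ T.powersetCard j,
          (((T.powersetCard m).filter (fun s => u ⊆ s)).card : ℝ)
            * ((∏ x ∈ u, w x) * t ^ (m - u.card))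
      = ∑ j ∈ range (m + 1), ∑ u ∈ T.powersetCard j,
          (((T.powersetCard m).filter (fun s => u ⊆ s)).card : ℝ)
            * ((∏ x ∈ u, w x) * t ^ (m - u.card)) := by
    symm
    refine sum_subset (range_subset_range.2 (by omega)) ?_
    intro j hj hj'
    rw [mem_range] at hj hj'
    refine sum_eq_zero fun u hu => ?_
    have huc : m < u.card := by
      rw [(mem_powersetCard.1 hu).2]; omega
    rw [filter_superset_empty huc]
    simp
  rw [step1, step2, step3, step4]
  refine sum_congr rfl fun j hj => ?_
  rw [mem_range] at hj
  rw [E, mul_sum]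
  refine sum_congr rfl fun u hu => ?_
  obtain ⟨huT, huc⟩ := mem_powersetCard.1 hu
  rw [card_filter_superset huT (by omega), huc]
  ring

lemma E_one (w : ι → ℝ) (T : Finset ι) : E w T 1 = ∑ l ∈ T, w l := by
  have h := sum_mul_E_erase w T 0
  simp only [E_zero, mul_one, Nat.cast_zero, zero_add, one_mul] at h
  rw [← h]

theorem key (k : ℕ) : ∀ (T : Finset ι) (ν : ι → ℝ),
    (∀ t : ℝ, 0 < t → ∀ j, 1 ≤ j → j ≤ k → 0 < E (fun l => ν l + t) T j) →
    ∀ i ∈ T, 0 ≤ E ν (T.erase i) (k - 1) := by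
  induction k using Nat.strong_induction_on with
  | _ k IH =>
  rcases k with _ | k
  · intro T ν _ i _
    norm_num [E_zero]
  rcases k with _ | m
  · intro T ν _ i _
    norm_num [E_zero]
  intro T ν hcl i hiT
  show 0 ≤ E ν (T.erase i) (m + 1)
  by_contra hneg
  push_neg at hneg
  set T' := T.erase i with hT'def
  have hTcard : m + 2 ≤ T.card := by
    by_contra hc
    push_neg at hc
    have h0 := hcl 1 one_pos (m + 2) (by omega) le_rfl
    rw [E_of_card_lt (by omega)] at h0
    exact lt_irrefl 0 h0
  have hT'card : T'.card = T.card - 1 := card_erase_of_mem hiT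
  have hT'm : m + 1 ≤ T'.card := by omega
  have hν0 : (fun l => ν l + (0:ℝ)) = ν := by funext l; ring
  have hlow : ∀ (ρ : ι → ℝ),
      (∀ t : ℝ, 0 < t → ∀ j, 1 ≤ j → j ≤ m + 2 → 0 < E (fun l => ρ l + t) T j) →
      ∀ j, j ≤ m → 0 ≤ E ρ T' j := by
    intro ρ hρ j hj
    rcases Nat.eq_zero_or_pos j with rfl | hj0
    · rw [E_zero]; exact zero_le_one
    · have h := IH (j + 1) (by omega) T ρ
        (fun t ht j' h1 h2 => hρ t ht j' h1 (by omega)) i hiT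
      simpa using h
  have hmid0 : ∀ j, j ≤ m → 0 ≤ E ν T' j := hlow ν hcl
  set g : ℝ → ℝ := fun t => E (fun l => ν l + t) T' (m + 1) with hgdef
  have hg0 : g 0 = E ν T' (m + 1) := by
    show E (fun l => ν l + 0) T' (m + 1) = _
    rw [hν0]
  have hgcont : Continuous g := by
    have hrfl : g = fun t => ∑ s ∈ T'.powersetCard (m + 1), ∏ x ∈ s, (ν x + t) := rfl
    rw [hrfl]
    exact continuous_finset_sum _ fun s _ =>
      continuous_finset_prod _ fun x _ => continuous_const.add continuous_id
  have hglb : ∀ t : ℝ, 0 ≤ t → t ^ (m + 1) + E ν T' (m + 1) ≤ g t := by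
    intro t ht
    have hexp : g t = ∑ j ∈ range (m + 1 + 1),
        ((T'.card - j).choose (m + 1 - j) : ℝ) * t ^ (m + 1 - j) * E ν T' j :=
      E_shift ν T' hT'm t
    rw [hexp, sum_range_succ]
    have hlast : ((T'.card - (m + 1)).choose (m + 1 - (m + 1)) : ℝ) * t ^ (m + 1 - (m + 1))
        * E ν T' (m + 1) = E ν T' (m + 1) := by
      simp
    rw [hlast]
    have hterms : ∀ j ∈ range (m + 1),
        0 ≤ ((T'.card - j).choose (m + 1 - j) : ℝ) * t ^ (m + 1 - j) * E ν T' j := by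
      intro j hj
      rw [mem_range] at hj
      exact mul_nonneg (mul_nonneg (Nat.cast_nonneg _) (pow_nonneg ht _)) (hmid0 j (by omega))
    have h0term : t ^ (m + 1) ≤ ((T'.card - 0).choose (m + 1 - 0) : ℝ) * t ^ (m + 1 - 0)
        * E ν T' 0 := by
      rw [E_zero, mul_one]
      simp only [Nat.sub_zero]
      have h1 : (1:ℝ) ≤ ((T'.card).choose (m + 1) : ℝ) := by
        have := Nat.choose_pos hT'm
        exact_mod_cast by omega
      nlinarith [pow_nonneg ht (m + 1)]
    have hs := single_le_sum hterms (mem_range.2 (by omega : 0 < m + 1))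
    linarith [h0term.trans hs]
  have hB0neg : E ν T' (m + 1) < 0 := hneg
  set Tb : ℝ := 1 - E ν T' (m + 1) with hTbdef
  have hTb1 : 1 ≤ Tb := by rw [hTbdef]; linarith
  have hgTb : ∀ t : ℝ, Tb ≤ t → 0 < g t := by
    intro t htb
    have ht1 : 1 ≤ t := le_trans hTb1 htb
    have h2 := hglb t (by linarith)
    have hpw : t ≤ t ^ (m + 1) := le_self_pow₀ ht1 (by omega)
    rw [hTbdef] at htb
    linarith
  set Z : Set ℝ := {t : ℝ | 0 ≤ t ∧ g t ≤ 0} with hZdef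
  have hZ0 : (0:ℝ) ∈ Z := ⟨le_rfl, by rw [hg0]; exact hB0neg.le⟩
  have hZclosed : IsClosed Z := by
    have hZeq : Z = {t : ℝ | 0 ≤ t} ∩ {t : ℝ | g t ≤ 0} := rfl
    rw [hZeq]
    exact (isClosed_le continuous_const continuous_id).inter
      (isClosed_le hgcont continuous_const)
  have hZbdd : BddAbove Z := by
    refine ⟨Tb, fun t ht => ?_⟩
    by_contra hc
    push_neg at hc
    exact absurd ht.2 (not_le.2 (hgTb t hc.le))
  have ht0mem : sSup Z ∈ Z := hZclosed.csSup_mem ⟨0, hZ0⟩ hZbdd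
  set t0 := sSup Z with ht0def
  have ht0nn : 0 ≤ t0 := ht0mem.1
  have hgt0le : g t0 ≤ 0 := ht0mem.2
  have hafter : ∀ t : ℝ, t0 < t → 0 < g t := by
    intro t ht
    by_contra hc
    push_neg at hc
    exact absurd (le_csSup hZbdd ⟨le_trans ht0nn ht.le, hc⟩) (not_le.2 ht)
  have ht0Tb : t0 ≤ Tb := by
    by_contra hc
    push_neg at hc
    exact absurd hgt0le (not_le.2 (hgTb t0 hc.le))
  have hgt00 : g t0 = 0 := by
    obtain ⟨c, hc1, hc2⟩ := intermediate_value_Icc (by linarith : t0 ≤ Tb + 1)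
      hgcont.continuousOn ⟨hgt0le, (hgTb (Tb + 1) (by linarith)).le⟩
    have hceq : c = t0 := by
      rcases eq_or_lt_of_le hc1.1 with h | h
      · exact h.symm
      · exact absurd hc2 (ne_of_gt (hafter c h))
    rw [← hceq]; exact hc2
  have ht0pos : 0 < t0 := by
    rcases eq_or_lt_of_le ht0nn with h | h
    · exfalso
      rw [← h] at hgt00
      rw [hg0] at hgt00
      linarith
    · exact h
  set ν' : ι → ℝ := fun l => ν l + t0 with hν'def
  have hν'shift : ∀ r : ℝ, (fun l => ν' l + r) = (fun l => ν l + (t0 + r)) := by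
    intro r; funext l; rw [hν'def]; ring
  have hν'G : ∀ j, 1 ≤ j → j ≤ m + 2 → 0 < E ν' T j := hcl t0 ht0pos
  have hcl' : ∀ r : ℝ, 0 < r → ∀ j, 1 ≤ j → j ≤ m + 2 → 0 < E (fun l => ν' l + r) T j := by
    intro r hr j h1 h2
    rw [hν'shift r]
    exact hcl (t0 + r) (by linarith) j h1 h2
  have hmid' : ∀ j, j ≤ m → 0 ≤ E ν' T' j := hlow ν' hcl'
  have hET'0 : E ν' T' (m + 1) = 0 := hgt00
  have hclT' : ∀ s : ℝ, 0 < s → ∀ j, 1 ≤ j → j ≤ m + 1 → 0 < E (fun l => ν' l + s) T' j := by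
    intro s hs j hj1 hjm
    rcases eq_or_lt_of_le hjm with hjeq | hjlt
    · rw [hjeq, hν'shift s]
      exact hafter (t0 + s) (by linarith)
    · have hjm' : j ≤ m := by omega
      rw [E_shift ν' T' (by omega : j ≤ T'.card) s]
      refine sum_pos' ?_ ⟨0, mem_range.2 (by omega), ?_⟩
      · intro jj hjj
        rw [mem_range] at hjj
        exact mul_nonneg (mul_nonneg (Nat.cast_nonneg _) (pow_nonneg hs.le _))
          (hmid' jj (by omega))
      · rw [E_zero, mul_one]
        simp only [Nat.sub_zero]
        have h1 : 0 < ((T'.card).choose j : ℝ) := by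
          exact_mod_cast Nat.choose_pos (by omega)
        exact mul_pos h1 (pow_pos hs _)
  have hdel2 : ∀ l ∈ T', 0 ≤ E ν' (T'.erase l) m := by
    intro l hl
    have h := IH (m + 1) (by omega) T' ν' hclT' l hl
    simpa using h
  have hsum : ∑ l ∈ T', ν' l * E ν' (T'.erase l) (m + 1) ≤ 0 := by
    refine sum_nonpos fun l hl => ?_
    have hI2 := E_succ hl ν' m
    rw [hET'0] at hI2
    have hE2 : E ν' (T'.erase l) (m + 1) = -(ν' l * E ν' (T'.erase l) m) := by linarith
    rw [hE2]
    have h3 := hdel2 l hl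
    nlinarith [sq_nonneg (ν' l)]
  rw [sum_mul_E_erase ν' T' (m + 1)] at hsum
  have hcastpos : (0:ℝ) < ((m + 1 : ℕ) : ℝ) + 1 := by positivity
  have hET'k : E ν' T' (m + 1 + 1) ≤ 0 := by
    by_contra hpos
    push_neg at hpos
    nlinarith
  have hfin := E_succ hiT ν' (m + 1)
  have hpos := hν'G (m + 1 + 1) (by omega) (by omega)
  rw [hfin, hET'0, mul_zero, zero_add] at hpos
  exact absurd hpos (not_lt.2 hET'k)

end HMW

/-- The key Hou–Ma–Wu algebraic inequality, Case 2 form. -/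
theorem hmw_key_inequality (n k : ℕ) (hk : 2 ≤ k) (hkn : k ≤ n)
    (δ : ℝ) (hδ0 : 0 < δ) (hδ : δ ≤ 1 / 2)
    (lam : Fin n → ℝ) (hlam : GammaCone n k lam)
    (i1 p : Fin n) (hmax : ∀ i, lam i ≤ lam i1) (hp : p ≠ i1)
    (hlp : -δ * lam i1 ≤ lam p)
    (hsig : δ⁻¹ * esymmDel n (k - 1) lam i1 ≤ esymmDel n (k - 1) lam p) :
    lam i1 * esymmDel n (k - 1) lam i1 ≤
      (2 * δ * lam i1 + (1 - 2 * δ) * lam p) * esymmDel n (k - 1) lam p := by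
  have hlamE : ∀ j, 1 ≤ j → j ≤ k → 0 < HMW.E lam Finset.univ j := hlam
  have hkn' : k ≤ (Finset.univ : Finset (Fin n)).card := by
    rw [Finset.card_univ, Fintype.card_fin]; exact hkn
  have hclosure : ∀ t : ℝ, 0 < t → ∀ j, 1 ≤ j → j ≤ k →
      0 < HMW.E (fun l => lam l + t) Finset.univ j := by
    intro t ht j hj1 hjk
    rw [HMW.E_shift lam Finset.univ (le_trans hjk hkn') t]
    refine Finset.sum_pos' ?_ ⟨j, Finset.mem_range.2 (by omega), ?_⟩
    · intro jj hjj
      rw [Finset.mem_range] at hjj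
      refine mul_nonneg (mul_nonneg (Nat.cast_nonneg _) (pow_nonneg ht.le _)) ?_
      rcases Nat.eq_zero_or_pos jj with rfl | hjj0
      · rw [HMW.E_zero]; exact zero_le_one
      · exact (hlamE jj hjj0 (by omega)).le
    · have hlast : (((Finset.univ : Finset (Fin n)).card - j).choose (j - j) : ℝ)
          * t ^ (j - j) * HMW.E lam Finset.univ j = HMW.E lam Finset.univ j := by
        simp
      rw [hlast]
      exact hlamE j hj1 hjk
  have hA : 0 ≤ HMW.E lam (Finset.univ.erase i1) (k - 1) :=
    HMW.key k Finset.univ lam hclosure i1 (Finset.mem_univ i1)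
  have hS1 : 0 < ∑ l, lam l := by
    have h := hlamE 1 le_rfl (by omega)
    rwa [HMW.E_one] at h
  have hl1pos : 0 < lam i1 := by
    by_contra hc
    push_neg at hc
    have hsum : ∑ l, lam l ≤ 0 :=
      Finset.sum_nonpos fun l _ => le_trans (hmax l) hc
    linarith
  set A := esymmDel n (k - 1) lam i1 with hAdef
  set B := esymmDel n (k - 1) lam p with hBdef
  have hA' : 0 ≤ A := hA
  have hBnn : 0 ≤ B := le_trans (mul_nonneg (inv_nonneg.2 hδ0.le) hA') hsig
  have hAB : A ≤ δ * B := by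
    have h1 := mul_le_mul_of_nonneg_left hsig hδ0.le
    have h2 : δ * (δ⁻¹ * A) = A := by
      field_simp
    linarith
  have hmp : lam p ≤ lam i1 := hmax p
  have hcoef : 0 ≤ δ * lam i1 + (1 - 2 * δ) * lam p := by
    have h3 : (1 - 2 * δ) * (-δ * lam i1) ≤ (1 - 2 * δ) * lam p :=
      mul_le_mul_of_nonneg_left hlp (by linarith)
    nlinarith [mul_pos hδ0 hl1pos, mul_nonneg (mul_nonneg hδ0.le hδ0.le) hl1pos.le]
  calc lam i1 * A ≤ lam i1 * (δ * B) := mul_le_mul_of_nonneg_left hAB hl1pos.le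
    _ ≤ (2 * δ * lam i1 + (1 - 2 * δ) * lam p) * B := by
        nlinarith [mul_nonneg hcoef hBnn]
end

section
/- Let 2 ≤ k ≤ n, let 0 < δ ≤ 1/2, and let λ ∈ Γ_k ⊂ ℝ^n with λ_1 = max_i λ_i. Suppose p ≠ 1 is an index such that λ_p ≥ −δ·λ_1 and σ_{k−1}(λ|p) ≥ δ^{−1}·σ_{k−1}(λ|1). Then λ_1 · σ_{k−2}(λ|1p) ≥ (1−2δ) · σ_{k−1}(λ|p). -/
open Finset

section Aux
set_option linter.unusedSectionVars false

variable {α : Type*} [DecidableEq α]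

noncomputable def esymF (lam : α → ℝ) (A : Finset α) (m : ℕ) : ℝ :=
  ∑ s ∈ A.powersetCard m, ∏ i ∈ s, lam i

lemma esymF_zero (lam : α → ℝ) (A : Finset α) : esymF lam A 0 = 1 := by
  simp [esymF]

lemma esymF_of_card_lt (lam : α → ℝ) {A : Finset α} {m : ℕ} (h : A.card < m) :
    esymF lam A m = 0 := by
  simp [esymF, Finset.powersetCard_eq_empty.2 h]

/-- I1: split off an element. -/
lemma esymF_erase (lam : α → ℝ) {A : Finset α} {i : α} (hi : i ∈ A) (m : ℕ) :
    esymF lam A (m + 1)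
      = esymF lam (A.erase i) (m + 1) + lam i * esymF lam (A.erase i) m := by
  unfold esymF
  conv_lhs => rw [← Finset.insert_erase hi]
  rw [Finset.powersetCard_succ_insert (Finset.notMem_erase i A)]
  rw [Finset.sum_union]
  · congr 1
    rw [Finset.sum_image, Finset.mul_sum]
    · refine Finset.sum_congr rfl fun s hs => ?_
      have hi' : i ∉ s := fun h =>
        (Finset.notMem_erase i A) ((Finset.mem_powersetCard.1 hs).1 h)
      rw [Finset.prod_insert hi']
    · intro s hs t ht hst
      have hi1 : i ∉ s := fun h => (Finset.notMem_erase i A) ((Finset.mem_powersetCard.1 hs).1 h)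
      have hi2 : i ∉ t := fun h => (Finset.notMem_erase i A) ((Finset.mem_powersetCard.1 ht).1 h)
      have := congrArg (Finset.erase · i) hst
      simpa [Finset.erase_insert, hi1, hi2] using this
  · rw [Finset.disjoint_right]
    rintro s hs hs'
    obtain ⟨t, ht, rfl⟩ := Finset.mem_image.1 hs
    exact (Finset.notMem_erase i A) ((Finset.mem_powersetCard.1 hs').1 (Finset.mem_insert_self i t))

set_option linter.unusedSectionVars false

/-- I2: Euler-type identity. -/
lemma esymF_weighted (lam : α → ℝ) (A : Finset α) (m : ℕ) :
    ∑ j ∈ A, lam j * esymF lam (A.erase j) m = (m + 1 : ℝ) * esymF lam A (m + 1) := by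
  unfold esymF
  have hL : ∑ j ∈ A, lam j * ∑ s ∈ (A.erase j).powersetCard m, ∏ l ∈ s, lam l
      = ∑ p ∈ A.sigma (fun j => (A.erase j).powersetCard m), lam p.1 * ∏ l ∈ p.2, lam l := by
    rw [Finset.sum_sigma]
    exact Finset.sum_congr rfl fun j _ => by rw [Finset.mul_sum]
  have hR : (m + 1 : ℝ) * ∑ s ∈ A.powersetCard (m + 1), ∏ l ∈ s, lam l
      = ∑ q ∈ (A.powersetCard (m + 1)).sigma (fun t => t), ∏ l ∈ q.1, lam l := by
    rw [Finset.sum_sigma, Finset.mul_sum]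
    refine Finset.sum_congr rfl fun t ht => ?_
    simp only [Finset.sum_const, (Finset.mem_powersetCard.1 ht).2, nsmul_eq_mul]
    push_cast
    ring
  rw [hL, hR]
  refine Finset.sum_nbij' (i := fun p => ⟨insert p.1 p.2, p.1⟩) (j := fun q => ⟨q.2, q.1.erase q.2⟩)
    ?_ ?_ ?_ ?_ ?_
  · rintro ⟨j, s⟩ hp
    simp only [Finset.mem_sigma, Finset.mem_powersetCard] at hp ⊢
    obtain ⟨hj, hs, hcard⟩ := hp
    have hjs : j ∉ s := fun h => Finset.notMem_erase j A (hs h)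
    refine ⟨⟨Finset.insert_subset hj (hs.trans (Finset.erase_subset j A)), ?_⟩,
      Finset.mem_insert_self _ _⟩
    rw [Finset.card_insert_of_notMem hjs, hcard]
  · rintro ⟨t, j⟩ hq
    simp only [Finset.mem_sigma, Finset.mem_powersetCard] at hq ⊢
    obtain ⟨⟨ht, hcard⟩, hj⟩ := hq
    refine ⟨ht hj, fun x hx => Finset.mem_erase.2 ⟨(Finset.mem_erase.1 hx).1,
      ht (Finset.mem_of_mem_erase hx)⟩, ?_⟩
    rw [Finset.card_erase_of_mem hj, hcard]
    simp
  · rintro ⟨j, s⟩ hp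
    simp only [Finset.mem_sigma, Finset.mem_powersetCard] at hp
    obtain ⟨hj, hs, hcard⟩ := hp
    have hjs : j ∉ s := fun h => Finset.notMem_erase j A (hs h)
    simp [Finset.erase_insert hjs]
  · rintro ⟨t, j⟩ hq
    simp only [Finset.mem_sigma, Finset.mem_powersetCard] at hq
    obtain ⟨⟨ht, hcard⟩, hj⟩ := hq
    simp [Finset.insert_erase hj]
  · rintro ⟨j, s⟩ hp
    simp only [Finset.mem_sigma, Finset.mem_powersetCard] at hp
    obtain ⟨hj, hs, hcard⟩ := hp
    have hjs : j ∉ s := fun h => Finset.notMem_erase j A (hs h)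
    simp [Finset.prod_insert hjs]

lemma card_superset_filter {A u : Finset α} (hu : u ⊆ A) {m : ℕ} (hum : u.card ≤ m) :
    (((A.powersetCard m).filter (fun s => u ⊆ s)).card : ℕ)
      = (A.card - u.card).choose (m - u.card) := by
  rw [← Finset.card_sdiff_of_subset hu, ← Finset.card_powersetCard]
  refine Finset.card_nbij' (fun s => s \ u) (fun t => t ∪ u) ?_ ?_ ?_ ?_
  · intro s hs
    simp only [Finset.mem_coe, Finset.mem_filter, Finset.mem_powersetCard] at hs ⊢
    obtain ⟨⟨hsA, hsc⟩, hus⟩ := hs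
    exact ⟨Finset.sdiff_subset_sdiff hsA Finset.Subset.rfl, by rw [Finset.card_sdiff_of_subset hus, hsc]⟩
  · intro t ht
    simp only [Finset.mem_coe, Finset.mem_filter, Finset.mem_powersetCard] at ht ⊢
    obtain ⟨htA, htc⟩ := ht
    have hdisj : Disjoint t u := Finset.disjoint_of_subset_left htA Finset.sdiff_disjoint
    refine ⟨⟨Finset.union_subset (htA.trans Finset.sdiff_subset) hu, ?_⟩, Finset.subset_union_right⟩
    rw [Finset.card_union_of_disjoint hdisj, htc]
    omega
  · intro s hs
    simp only [Finset.mem_coe, Finset.mem_filter, Finset.mem_powersetCard] at hs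
    exact Finset.sdiff_union_of_subset hs.2
  · intro t ht
    simp only [Finset.mem_coe, Finset.mem_powersetCard] at ht
    have hdisj : Disjoint t u := Finset.disjoint_of_subset_left ht.1 Finset.sdiff_disjoint
    show (t ∪ u) \ u = t
    rw [Finset.union_sdiff_cancel_right hdisj]

lemma superset_filter_empty {A u : Finset α} {m : ℕ} (hum : m < u.card) :
    ((A.powersetCard m).filter (fun s => u ⊆ s)) = ∅ := by
  refine Finset.filter_false_of_mem fun s hs hus => ?_
  have := Finset.card_le_card hus
  rw [(Finset.mem_powersetCard.1 hs).2] at this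
  omega

/-- I3: shift expansion. -/
lemma esymF_shift (lam : α → ℝ) (A : Finset α) {m : ℕ} (hm : m ≤ A.card) (c : ℝ) :
    esymF (fun x => lam x + c) A m
      = ∑ j ∈ Finset.range (m + 1),
          ((A.card - j).choose (m - j) : ℝ) * c ^ (m - j) * esymF lam A j := by
  unfold esymF
  calc ∑ s ∈ A.powersetCard m, ∏ i ∈ s, (lam i + c)
      = ∑ s ∈ A.powersetCard m, ∑ u ∈ s.powerset, (∏ l ∈ u, lam l) * c ^ (m - u.card) := by
        refine Finset.sum_congr rfl fun s hs => ?_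
        rw [Finset.prod_add]
        refine Finset.sum_congr rfl fun u hu => ?_
        rw [Finset.prod_const, Finset.card_sdiff_of_subset (Finset.mem_powerset.1 hu),
          (Finset.mem_powersetCard.1 hs).2]
    _ = ∑ u ∈ A.powerset, ∑ s ∈ (A.powersetCard m).filter (fun s => u ⊆ s),
          (∏ l ∈ u, lam l) * c ^ (m - u.card) := by
        refine Finset.sum_comm' fun s u => ?_
        simp only [Finset.mem_powerset, Finset.mem_powersetCard, Finset.mem_filter]
        constructor
        · rintro ⟨⟨hsA, hsc⟩, hus⟩
          exact ⟨⟨⟨hsA, hsc⟩, hus⟩, hus.trans hsA⟩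
        · rintro ⟨⟨⟨hsA, hsc⟩, hus⟩, huA⟩
          exact ⟨⟨hsA, hsc⟩, hus⟩
    _ = ∑ u ∈ A.powerset,
          (((A.powersetCard m).filter (fun s => u ⊆ s)).card : ℝ)
            * ((∏ l ∈ u, lam l) * c ^ (m - u.card)) := by
        refine Finset.sum_congr rfl fun u _ => ?_
        rw [Finset.sum_const, nsmul_eq_mul]
    _ = ∑ j ∈ Finset.range (A.card + 1), ∑ u ∈ A.powersetCard j,
          (((A.powersetCard m).filter (fun s => u ⊆ s)).card : ℝ)
            * ((∏ l ∈ u, lam l) * c ^ (m - u.card)) := by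
        rw [Finset.powerset_card_disjiUnion]; exact Finset.sum_disjiUnion _ _ _
    _ = ∑ j ∈ Finset.range (m + 1),
          ((A.card - j).choose (m - j) : ℝ) * c ^ (m - j) * esymF lam A j := by
        rw [← Finset.sum_subset
          (Finset.range_subset_range.2 (Nat.add_le_add_right hm 1))
          (fun j _ hj => ?_)]
        · refine Finset.sum_congr rfl fun j hj => ?_
          rw [Finset.mem_range] at hj
          have hjm : j ≤ m := by omega
          have hstep : ∀ u ∈ A.powersetCard j,
              (((A.powersetCard m).filter (fun s => u ⊆ s)).card : ℝ)
                * ((∏ l ∈ u, lam l) * c ^ (m - u.card))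
              = ((A.card - j).choose (m - j) : ℝ) * c ^ (m - j) * ∏ l ∈ u, lam l := by
            intro u hu
            obtain ⟨huA, huc⟩ := Finset.mem_powersetCard.1 hu
            rw [huc, card_superset_filter huA (huc ▸ hjm)]
            rw [huc]
            ring
          rw [Finset.sum_congr rfl hstep, ← Finset.mul_sum]
          rfl
        · have hjm : m < j := by
            rcases Nat.lt_or_ge m j with h | h
            · exact h
            · exact absurd (Finset.mem_range.2 (by omega)) hj
          refine Finset.sum_eq_zero fun u hu => ?_
          obtain ⟨huA, huc⟩ := Finset.mem_powersetCard.1 hu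
          rw [superset_filter_empty (by omega)]
          simp

/-- Positivity of shifted esym. -/
lemma esymF_shift_pos (lam : α → ℝ) (A : Finset α) {m : ℕ} (hm : m ≤ A.card)
    {c : ℝ} (hc : 0 < c) (h : ∀ j, j ≤ m → 0 ≤ esymF lam A j) :
    0 < esymF (fun x => lam x + c) A m := by
  rw [esymF_shift lam A hm c]
  rw [Finset.sum_range_succ']
  have h0 : (0:ℝ) < ((A.card - 0).choose (m - 0) : ℝ) * c ^ (m - 0) * esymF lam A 0 := by
    rw [esymF_zero]
    have : 0 < (A.card).choose m := Nat.choose_pos hm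
    positivity
  have h1 : (0:ℝ) ≤ ∑ j ∈ Finset.range m,
      ((A.card - (j+1)).choose (m - (j+1)) : ℝ) * c ^ (m - (j+1)) * esymF lam A (j+1) := by
    refine Finset.sum_nonneg fun j hj => ?_
    rw [Finset.mem_range] at hj
    have := h (j+1) (by omega)
    positivity
  simpa using add_pos_of_nonneg_of_pos h1 h0

lemma gamma_shift {k : ℕ} {lam : α → ℝ} {A : Finset α} (hk : k ≤ A.card)
    (hG : ∀ j, 1 ≤ j → j ≤ k → 0 < esymF lam A j) {s : ℝ} (hs : 0 ≤ s) :
    ∀ j, 1 ≤ j → j ≤ k → 0 < esymF (fun x => lam x + s) A j := by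
  intro j hj1 hjk
  rcases eq_or_lt_of_le hs with rfl | hs'
  · simpa using hG j hj1 hjk
  · refine esymF_shift_pos lam A (hjk.trans hk) hs' fun i hi => ?_
    rcases Nat.eq_zero_or_pos i with rfl | hi1
    · rw [esymF_zero]; norm_num
    · exact (hG i hi1 (hi.trans hjk)).le

lemma esymF_continuous (lam : α → ℝ) (A : Finset α) (m : ℕ) :
    Continuous (fun c : ℝ => esymF (fun x => lam x + c) A m) := by
  unfold esymF
  refine continuous_finset_sum _ fun s _ => ?_
  exact continuous_finset_prod _ fun i _ => by continuity

lemma esymF_nonneg_of_shift (lam : α → ℝ) (A : Finset α) (m : ℕ)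
    (h : ∀ ε : ℝ, 0 < ε → 0 < esymF (fun x => lam x + ε) A m) :
    0 ≤ esymF lam A m := by
  have hc := (esymF_continuous lam A m).continuousAt (x := (0:ℝ))
  have ht : Filter.Tendsto (fun c : ℝ => esymF (fun x => lam x + c) A m)
      (nhdsWithin 0 (Set.Ioi 0)) (nhds (esymF (fun x => lam x + 0) A m)) :=
    hc.tendsto.mono_left nhdsWithin_le_nhds
  have heq : esymF (fun x => lam x + 0) A m = esymF lam A m := by simp
  rw [heq] at ht
  refine ge_of_tendsto ht ?_
  filter_upwards [self_mem_nhdsWithin] with ε hε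
  exact (h ε hε).le

/-- Main positivity lemma: deleting one entry from a vector in `Γ_k` keeps
`σ_m > 0` for `m ≤ k-1`. -/
lemma esymF_del_pos : ∀ k : ℕ, ∀ (lam : α → ℝ) (A : Finset α), k ≤ A.card →
    (∀ j, 1 ≤ j → j ≤ k → 0 < esymF lam A j) →
    ∀ i ∈ A, ∀ m, m ≤ k - 1 → 0 < esymF lam (A.erase i) m := by
  intro k
  induction k using Nat.strong_induction_on with
  | _ k IH =>
  intro lam A hkA hG i hi m hm
  rcases Nat.lt_or_ge k 2 with hk2 | hk2
  · have hm0 : m = 0 := by omega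
    rw [hm0, esymF_zero]
    norm_num
  obtain ⟨k2, rfl⟩ : ∃ k2, k = k2 + 2 := ⟨k - 2, by omega⟩
  rcases Nat.lt_or_ge m (k2 + 1) with hmlt | hmge
  · exact IH (k2 + 1) (by omega) lam A (by omega)
      (fun j h1 h2 => hG j h1 (by omega)) i hi m (by omega)
  have hm' : m = k2 + 1 := by omega
  subst hm'
  by_contra hcon
  push_neg at hcon
  set B := A.erase i with hBdef
  have hBcard : B.card = A.card - 1 := Finset.card_erase_of_mem hi
  have hkB : k2 + 1 ≤ B.card := by omega
  have hsmall : ∀ mm, mm ≤ k2 → 0 < esymF lam B mm := by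
    intro mm hmm
    rcases Nat.eq_zero_or_pos mm with rfl | hmm1
    · rw [esymF_zero]; norm_num
    · exact IH (k2 + 1) (by omega) lam A (by omega)
        (fun j h1 h2 => hG j h1 (by omega)) i hi mm (by omega)
  -- lower bound for the shifted sigma
  have hfb : ∀ s : ℝ, 0 ≤ s →
      s ^ (k2 + 1) + esymF lam B (k2 + 1) ≤ esymF (fun x => lam x + s) B (k2 + 1) := by
    intro s hs
    rw [esymF_shift lam B hkB s]
    rw [Finset.sum_range_succ]
    have hlast : ((B.card - (k2 + 1)).choose (k2 + 1 - (k2 + 1)) : ℝ)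
        * s ^ (k2 + 1 - (k2 + 1)) * esymF lam B (k2 + 1) = esymF lam B (k2 + 1) := by
      simp
    rw [hlast]
    have hterm0 : s ^ (k2 + 1) ≤ ((B.card - 0).choose (k2 + 1 - 0) : ℝ)
        * s ^ (k2 + 1 - 0) * esymF lam B 0 := by
      rw [esymF_zero]
      simp only [Nat.sub_zero]
      have hch : (1 : ℝ) ≤ ((B.card).choose (k2 + 1) : ℝ) := by
        exact_mod_cast Nat.one_le_iff_ne_zero.2 (Nat.choose_pos hkB).ne'
      have hsp : 0 ≤ s ^ (k2 + 1) := by positivity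
      nlinarith
    have hmono : s ^ (k2 + 1) ≤ ∑ j ∈ Finset.range (k2 + 1),
        ((B.card - j).choose (k2 + 1 - j) : ℝ) * s ^ (k2 + 1 - j) * esymF lam B j := by
      refine hterm0.trans (Finset.single_le_sum (f := fun j =>
        ((B.card - j).choose (k2 + 1 - j) : ℝ) * s ^ (k2 + 1 - j) * esymF lam B j)
        (fun j hj => ?_) (by simp))
      rw [Finset.mem_range] at hj
      have := hsmall j (by omega)
      positivity
    linarith
  -- IVT to find a shift with sigma exactly zero
  set E0 := esymF lam B (k2 + 1) with hE0
  set s1 : ℝ := 1 - E0 with hs1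
  have hs1pos : 1 ≤ s1 := by simp only [hs1]; linarith
  set f : ℝ → ℝ := fun s => esymF (fun x => lam x + s) B (k2 + 1) with hfdef
  have hf0 : f 0 = E0 := by
    simp only [hfdef, add_zero]
    rfl
  have hfs1 : 1 ≤ f s1 := by
    have h1 := hfb s1 (by linarith)
    have h2 : s1 ≤ s1 ^ (k2 + 1) := le_self_pow₀ (by linarith) (by omega)
    simp only [hfdef]
    have : s1 + E0 = 1 := by simp [hs1]
    linarith
  have hcont : ContinuousOn f (Set.Icc 0 s1) := (esymF_continuous lam B (k2 + 1)).continuousOn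
  have hmem : (0 : ℝ) ∈ Set.Icc (f 0) (f s1) := by
    constructor
    · rw [hf0]; exact hcon
    · linarith
  obtain ⟨s0, hs0mem, hfs0⟩ := intermediate_value_Icc (by linarith : (0:ℝ) ≤ s1) hcont hmem
  set lam' : α → ℝ := fun x => lam x + s0 with hlam'
  have hG' : ∀ j, 1 ≤ j → j ≤ k2 + 2 → 0 < esymF lam' A j :=
    gamma_shift hkA hG hs0mem.1
  have hzero : esymF lam' B (k2 + 1) = 0 := hfs0
  -- derive contradiction
  have hSk : 0 < esymF lam' A (k2 + 2) := hG' (k2 + 2) (by omega) le_rfl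
  have hEB2 : 0 < esymF lam' B (k2 + 2) := by
    have hsplit := esymF_erase lam' hi (k2 + 1)
    rw [← hBdef, hzero, mul_zero, add_zero] at hsplit
    linarith [hsplit, hSk]
  have hBbig : k2 + 2 ≤ B.card := by
    by_contra hb
    push_neg at hb
    rw [esymF_of_card_lt lam' hb] at hEB2
    exact lt_irrefl 0 hEB2
  have hEBm : ∀ mm, mm ≤ k2 → 0 < esymF lam' B mm := by
    intro mm hmm
    rcases Nat.eq_zero_or_pos mm with rfl | hmm1
    · rw [esymF_zero]; norm_num
    · exact IH (k2 + 1) (by omega) lam' A (by omega)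
        (fun j h1 h2 => hG' j h1 (by omega)) i hi mm (by omega)
  have hnn : ∀ j ∈ B, 0 ≤ esymF lam' (B.erase j) k2 := by
    intro j hj
    refine esymF_nonneg_of_shift _ _ _ fun ε hε => ?_
    have hGB : ∀ mm, 1 ≤ mm → mm ≤ k2 + 1 → 0 < esymF (fun x => lam' x + ε) B mm := by
      intro mm h1 h2
      refine esymF_shift_pos lam' B (by omega) hε fun jj hjj => ?_
      rcases Nat.eq_zero_or_pos jj with rfl | hjj1
      · rw [esymF_zero]; norm_num
      rcases Nat.lt_or_ge jj (k2 + 1) with hlt | hge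
      · exact (hEBm jj (by omega)).le
      · have : jj = k2 + 1 := by omega
        rw [this, hzero]
    exact IH (k2 + 1) (by omega) (fun x => lam' x + ε) B (by omega) hGB j hj k2 (by omega)
  have hIdent : ∀ j ∈ B, esymF lam' (B.erase j) (k2 + 1)
      = -(lam' j * esymF lam' (B.erase j) k2) := by
    intro j hj
    have hsplit := esymF_erase lam' hj k2
    rw [hzero] at hsplit
    linarith
  have hEuler := esymF_weighted lam' B (k2 + 1)
  have hout : ∑ j ∈ B, lam' j * esymF lam' (B.erase j) (k2 + 1) ≤ 0 := by
    refine Finset.sum_nonpos fun j hj => ?_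
    rw [hIdent j hj]
    have h1 := hnn j hj
    nlinarith [sq_nonneg (lam' j)]
  rw [hEuler] at hout
  have hcast : (0:ℝ) < ((k2 + 1 : ℕ) + 1 : ℝ) := by positivity
  nlinarith


end Aux

/-- The concavity bound `λ_1 · σ_{k−2}(λ|1p) ≥ (1−2δ) · σ_{k−1}(λ|p)` of Hou–Ma–Wu. -/
theorem hmw_concavity_bound (n k : ℕ) (hk : 2 ≤ k) (hkn : k ≤ n)
    (δ : ℝ) (hδ0 : 0 < δ) (hδ : δ ≤ 1 / 2)
    (lam : Fin n → ℝ) (hlam : GammaCone n k lam)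
    (i1 p : Fin n) (hmax : ∀ i, lam i ≤ lam i1) (hp : p ≠ i1)
    (hlp : -δ * lam i1 ≤ lam p)
    (hsig : δ⁻¹ * esymmDel n (k - 1) lam i1 ≤ esymmDel n (k - 1) lam p) :
    (1 - 2 * δ) * esymmDel n (k - 1) lam p ≤ lam i1 * esymmDel2 n (k - 2) lam i1 p := by
  obtain ⟨k2, rfl⟩ : ∃ k2, k = k2 + 2 := ⟨k - 2, by omega⟩
  have hk1 : k2 + 2 - 1 = k2 + 1 := by omega
  have hk2' : k2 + 2 - 2 = k2 := by omega
  rw [hk1] at hsig ⊢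
  rw [hk2']
  have hcard : (Finset.univ : Finset (Fin n)).card = n := by
    rw [Finset.card_univ, Fintype.card_fin]
  have hG : ∀ j, 1 ≤ j → j ≤ k2 + 2 → 0 < esymF lam Finset.univ j := hlam
  -- positivity of the max entry
  have hl1pos : 0 < lam i1 := by
    have hS1 : 0 < esymF lam Finset.univ 1 := hG 1 le_rfl (by omega)
    have hsum := esymF_weighted lam (Finset.univ : Finset (Fin n)) 0
    simp only [esymF_zero, mul_one] at hsum
    by_contra hneg
    push_neg at hneg
    have : ∑ j : Fin n, lam j ≤ 0 :=
      Finset.sum_nonpos fun j _ => (hmax j).trans hneg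
    rw [hsum] at this
    norm_num at this
    linarith
  -- sigma_{k-1}(lam | i1) > 0
  have hpi1 : 0 < esymF lam (Finset.univ.erase i1) (k2 + 1) :=
    esymF_del_pos (k2 + 2) lam Finset.univ (by omega) hG i1 (Finset.mem_univ i1)
      (k2 + 1) (by omega)
  -- split identities
  have hpmem : p ∈ Finset.univ.erase i1 := Finset.mem_erase.2 ⟨hp, Finset.mem_univ p⟩
  have hi1mem : i1 ∈ Finset.univ.erase p := Finset.mem_erase.2 ⟨fun h => hp h.symm, Finset.mem_univ i1⟩
  set A : ℝ := esymF lam ((Finset.univ.erase i1).erase p) (k2 + 1) with hA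
  set Bq : ℝ := esymF lam ((Finset.univ.erase i1).erase p) k2 with hB
  have hsplit1 : esymF lam (Finset.univ.erase i1) (k2 + 1) = A + lam p * Bq :=
    esymF_erase lam hpmem k2
  have hsplitp : esymF lam (Finset.univ.erase p) (k2 + 1) = A + lam i1 * Bq := by
    have := esymF_erase lam hi1mem k2
    rw [Finset.erase_right_comm] at this
    exact this
  have hDel1 : esymmDel n (k2 + 1) lam i1 = A + lam p * Bq := hsplit1
  have hDelp : esymmDel n (k2 + 1) lam p = A + lam i1 * Bq := hsplitp
  have hDel2 : esymmDel2 n k2 lam i1 p = Bq := rfl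
  rw [hDelp, hDel2]
  rw [hDel1, hDelp] at hsig
  rw [hsplit1] at hpi1
  -- now pure arithmetic
  have hsig' : A + lam p * Bq ≤ δ * (A + lam i1 * Bq) := by
    have h1 := mul_le_mul_of_nonneg_left hsig hδ0.le
    rw [← mul_assoc, mul_inv_cancel₀ hδ0.ne', one_mul] at h1
    exact h1
  have hmaxp : lam p ≤ lam i1 := hmax p
  rcases le_or_gt 0 Bq with hBq | hBq
  · -- B ≥ 0 case
    have h2 : -lam p * Bq ≤ δ * lam i1 * Bq := by
      have : -lam p ≤ δ * lam i1 := by linarith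
      exact mul_le_mul_of_nonneg_right this hBq
    have h3 : 0 ≤ δ * lam i1 * Bq := by positivity
    rcases le_or_gt 0 A with hA0 | hA0
    · nlinarith
    · nlinarith
  · -- B < 0 case: contradiction with hpi1
    exfalso
    have h4 : (lam i1 - lam p) * Bq ≤ 0 :=
      mul_nonpos_of_nonneg_of_nonpos (by linarith) hBq.le
    nlinarith
end
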